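/- arXiv:1808.01221 — 4 statements merged into one kernel-verified Lean document; each statement's English description precedes it below -/
import Mathlib

section
/- Let $0 < |q| < 1$, $\tau \in \mathbb{C}^n$ with $0 < |\tau_1| < \cdots < |\tau_n| < 1$, and $\alpha \in \mathbb{Z}^n$. Define $\overline{\alpha}_i := q^{\alpha_i}(\tau_{\pi_\alpha^{-1}(i)})^{\mathrm{sgn}(\alpha_i)}$, where $\pi_\alpha \in S_n$ is the unique permutation with $\pi_\alpha^{-1}(i) < \pi_\alpha^{-1}(j)$ for $i<j$ iff $|\alpha_i| > |\alpha_j|$ or $0 \le \alpha_i = \pm\alpha_j$. If $1 \le j \le n$ and $s_j\alpha \ne \alpha$, then $\mathbf{s_j}\overline{\alpha} = \overline{s_j\alpha}$, where for $j < n$ the action $\mathbf{s_j}$ swaps coordinates $j$ and $j+1$ of a point in $(\mathbb{C}^*)^n$, and $\mathbf{s_n}$ inverts the $n$-th coordinate. -/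
noncomputable section

/-- The weight `|α| = |α₁| + ⋯ + |αₙ|`. -/
def wtZ {n : ℕ} (α : Fin n → ℤ) : ℕ := ∑ i, (α i).natAbs

/-- The chain condition `0 < |τ₁| < ⋯ < |τₙ| < 1`. -/
def TauChain {n : ℕ} (τ : Fin n → ℂ) : Prop :=
  (∀ i, 0 < ‖τ i‖) ∧ StrictMono (fun i => ‖τ i‖) ∧
    ∀ i, ‖τ i‖ < 1

/-- `π` is the Sahi permutation `π_α` of `α`: for `i < j`,
`π⁻¹(i) < π⁻¹(j)` iff `|α_i| > |α_j|` or `0 ≤ α_i = ±α_j`. -/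
def SahiPerm {n : ℕ} (α : Fin n → ℤ) (π : Equiv.Perm (Fin n)) : Prop :=
  ∀ i j : Fin n, i < j →
    (π.symm i < π.symm j ↔
      ((α j).natAbs < (α i).natAbs ∨ (0 ≤ α i ∧ (α i = α j ∨ α i = -α j))))

/-- The nonsymmetric interpolation point
`ᾱᵢ = q^{αᵢ} (τ_{π_α⁻¹(i)})^{sgn(αᵢ)}`, where `sgn a = 1` if `a ≥ 0`, `-1` else. -/
def ptbarA {n : ℕ} (q : ℂ) (τ : Fin n → ℂ) (α : Fin n → ℤ)
    (π : Equiv.Perm (Fin n)) : Fin n → ℂ :=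
  fun i => q ^ α i * (if 0 ≤ α i then τ (π.symm i) else (τ (π.symm i))⁻¹)

/-- The simple reflection `s_j` of type `Bₙ` acting additively on `ℤⁿ`. -/
def sjZ {n : ℕ} (j : Fin n) (α : Fin n → ℤ) : Fin n → ℤ :=
  if h : (j : ℕ) + 1 < n then α ∘ (Equiv.swap j ⟨(j : ℕ) + 1, h⟩)
  else Function.update α j (-(α j))

/-- The simple reflection `s_j` acting multiplicatively on `(ℂ*)ⁿ`:
for `j+1 < n` swap coordinates `j, j+1`; for `j` last, invert the last coordinate. -/
def sjC {n : ℕ} (j : Fin n) (x : Fin n → ℂ) : Fin n → ℂ :=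
  if h : (j : ℕ) + 1 < n then x ∘ (Equiv.swap j ⟨(j : ℕ) + 1, h⟩)
  else Function.update x j (x j)⁻¹

lemma sahi_uniq {n : ℕ} (α : Fin n → ℤ) (π π' : Equiv.Perm (Fin n))
    (h : ∀ i j : Fin n, i < j →
      (π.symm i < π.symm j ↔
        ((α j).natAbs < (α i).natAbs ∨ (0 ≤ α i ∧ (α i = α j ∨ α i = -α j)))))
    (h' : ∀ i j : Fin n, i < j →
      (π'.symm i < π'.symm j ↔
        ((α j).natAbs < (α i).natAbs ∨ (0 ≤ α i ∧ (α i = α j ∨ α i = -α j))))) :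
    π = π' := by
  set e : Fin n → Fin n := fun x => π'.symm (π x) with he
  have hmono : StrictMono e := by
    intro a b hab
    rcases lt_trichotomy (π a) (π b) with hlt | heq | hgt
    · have := (h' (π a) (π b) hlt)
      rw [he]; simp only
      rw [this, ← h (π a) (π b) hlt]
      simpa using hab
    · exact absurd (π.injective heq) (ne_of_lt hab)
    · have h1 := h (π b) (π a) hgt
      have h2 := h' (π b) (π a) hgt
      have : ¬ (π.symm (π b) < π.symm (π a)) := by simpa using (le_of_lt hab : a ≤ b).not_gt
      rw [h1] at this
      rw [← h2] at this
      rcases lt_trichotomy (e a) (e b) with h3 | h3 | h3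
      · exact h3
      · exact absurd (π.injective (π'.symm.injective h3)) (ne_of_lt hab)
      · exact absurd h3 this
  have hsurj : Function.Surjective e := π'.symm.surjective.comp π.surjective
  have hrange : Set.range e = Set.range (id : Fin n → Fin n) := by
    rw [hsurj.range_eq, Set.range_id]
  haveI : WellFoundedLT (Fin n) := Finite.to_wellFoundedLT
  have hid : e = id := (StrictMono.range_inj (f := e) (g := id) hmono strictMono_id).1 hrange
  refine Equiv.ext fun x => ?_
  have := congrFun hid x
  simp only [he, id] at this
  exact (π'.apply_eq_iff_eq_symm_apply.mpr this.symm).symm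

lemma sahi_flip (a b : ℤ) (hab : a ≠ b) :
    (¬(b.natAbs < a.natAbs ∨ (0 ≤ a ∧ (a = b ∨ a = -b)))) ↔
      (a.natAbs < b.natAbs ∨ (0 ≤ b ∧ (b = a ∨ b = -a))) := by omega

/-- If `s_j α ≠ α` then `𝐬_j ᾱ = (s_j α)‾`. -/
theorem stmt11 {n : ℕ} (q : ℂ) (hq0 : 0 < ‖q‖) (hq1 : ‖q‖ < 1)
    (τ : Fin n → ℂ) (hτ : TauChain τ) (α : Fin n → ℤ) (j : Fin n)
    (πa πb : Equiv.Perm (Fin n)) (ha : SahiPerm α πa) (hb : SahiPerm (sjZ j α) πb)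
    (hne : sjZ j α ≠ α) :
    sjC j (ptbarA q τ α πa) = ptbarA q τ (sjZ j α) πb := by
  by_cases h : (j : ℕ) + 1 < n
  · -- swap case
    set j' : Fin n := ⟨(j : ℕ) + 1, h⟩ with hj'
    have hjj' : j < j' := by simp [hj', Fin.lt_def]
    have hjne : j ≠ j' := ne_of_lt hjj'
    set sw := Equiv.swap j j' with hsw
    have hβ : sjZ j α = α ∘ sw := by rw [sjZ, dif_pos h]
    have hane : α j ≠ α j' := by
      intro hc
      apply hne
      rw [hβ]
      funext i
      rcases eq_or_ne i j with rfl | hij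
      · simp [hsw, Equiv.swap_apply_left, hc]
      rcases eq_or_ne i j' with rfl | hij'
      · simp [hsw, Equiv.swap_apply_right, hc]
      · simp [hsw, Equiv.swap_apply_of_ne_of_ne hij hij']
    -- candidate permutation
    have hb' : SahiPerm (α ∘ sw) (πa.trans sw) := by
      intro i k hik
      have hsymm : ∀ x, (πa.trans sw).symm x = πa.symm (sw x) := fun x => rfl
      simp only [hsymm, Function.comp_apply]
      rcases eq_or_ne i j with heq | hij
      · rcases eq_or_ne k j' with heq2 | hkj'
        · rw [heq, heq2, hsw, Equiv.swap_apply_left, Equiv.swap_apply_right]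
          have h1 := ha j j' hjj'
          have h2 : πa.symm j' < πa.symm j ↔ ¬ (πa.symm j < πa.symm j') := by
            constructor
            · exact fun hlt => (hlt : πa.symm j' < πa.symm j).not_gt
            · intro hnlt
              rcases lt_trichotomy (πa.symm j') (πa.symm j) with h3 | h3 | h3
              · exact h3
              · exact absurd (πa.symm.injective h3).symm hjne
              · exact absurd h3 hnlt
          rw [h2, h1]
          exact sahi_flip _ _ hane
        · have hkj : j' < k := by
            rw [heq] at hik
            rw [Fin.lt_def] at hik ⊢
            have hne2 : (k : ℕ) ≠ (j' : ℕ) := fun hc => hkj' (Fin.ext hc)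
            simp only [hj'] at *
            omega
          rw [heq, hsw, Equiv.swap_apply_left,
            Equiv.swap_apply_of_ne_of_ne (hjj'.trans hkj).ne' hkj']
          exact ha j' k hkj
      rcases eq_or_ne i j' with heq | hij'
      · have hkj2 : j' < k := heq ▸ hik
        have hkj : j < k := hjj'.trans hkj2
        rw [heq, hsw, Equiv.swap_apply_right,
          Equiv.swap_apply_of_ne_of_ne hkj.ne' hkj2.ne']
        exact ha j k hkj
      · rw [hsw, Equiv.swap_apply_of_ne_of_ne hij hij']
        rcases eq_or_ne k j with heq | hkj
        · have hik' : i < j' := by rw [heq] at hik; exact hik.trans hjj'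
          rw [heq, Equiv.swap_apply_left]
          exact ha i j' hik'
        rcases eq_or_ne k j' with heq | hkj'
        · have hik2 : i < j := by
            rw [heq] at hik
            rw [Fin.lt_def] at hik ⊢
            have hne2 : (i : ℕ) ≠ (j : ℕ) := fun hc => hij (Fin.ext hc)
            simp only [hj'] at hik
            omega
          rw [heq, Equiv.swap_apply_right]
          exact ha i j hik2
        · rw [Equiv.swap_apply_of_ne_of_ne hkj hkj']
          exact ha i k hik
    have hπb : πb = πa.trans sw := by
      apply sahi_uniq (α ∘ sw) _ _ (by rw [← hβ]; exact hb) hb'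
    funext i
    rw [sjC, dif_pos h, hβ, hπb]
    rfl
  · -- negation case
    have hβ : sjZ j α = Function.update α j (-(α j)) := by rw [sjZ, dif_neg h]
    have hjtop : ∀ k : Fin n, k ≤ j := by
      intro k
      have hj1 : (j : ℕ) = n - 1 := by omega
      simp only [Fin.le_def, hj1]
      omega
    have haj : α j ≠ 0 := by
      intro hc
      apply hne
      rw [hβ, hc, neg_zero, ← hc, Function.update_eq_self]
    set β := Function.update α j (-(α j)) with hβd
    have hβi : ∀ i : Fin n, i ≠ j → β i = α i := fun i hi => Function.update_of_ne hi _ _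
    have hβj : β j = -(α j) := Function.update_self _ _ _
    have hb' : SahiPerm β πa := by
      intro i k hik
      have hij : i ≠ j := ne_of_lt (lt_of_lt_of_le hik (hjtop k))
      rw [hβi i hij]
      rcases eq_or_ne k j with heq | hkj
      · rw [heq, hβj, ha i j (heq ▸ hik)]
        omega
      · rw [hβi k hkj]
        exact ha i k hik
    have hπb : πb = πa := sahi_uniq β _ _ (by rw [← hβ]; exact hb) hb'
    funext i
    rw [sjC, dif_neg h, hβ, hπb]
    rcases eq_or_ne i j with heq | hij
    · rw [heq, Function.update_self]
      simp only [ptbarA]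
      rw [hβj]
      rcases lt_or_ge (α j) 0 with hlt | hle
      · rw [if_neg (not_le.mpr hlt), if_pos (by omega : (0:ℤ) ≤ -α j),
          mul_inv, inv_inv, zpow_neg]
      · rw [if_pos hle, if_neg (by omega : ¬ (0:ℤ) ≤ -α j), mul_inv, zpow_neg]
    · rw [Function.update_of_ne hij]
      simp only [ptbarA]
      rw [hβi i hij]
end
end

section
/- Let $0 < |q| < 1$ and $\tau \in \mathbb{C}^n$ with $0 < |\tau_1| < \cdots < |\tau_n| < 1$. The map $\mathbb{Z}^n \to (\mathbb{C}^*)^n$, $\alpha \mapsto \overline{\alpha}$, where $\overline{\alpha}_i := q^{\alpha_i}(\tau_{\pi_\alpha^{-1}(i)})^{\mathrm{sgn}(\alpha_i)}$ with $\pi_\alpha$ the Sahi permutation of $\alpha$, is injective. -/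
noncomputable section

namespace Stmt13Aux

variable {n : ℕ}

lemma sahi_natAbs_le {α : Fin n → ℤ} {π : Equiv.Perm (Fin n)} (h : SahiPerm α π)
    {i j : Fin n} (hij : π.symm i < π.symm j) : (α j).natAbs ≤ (α i).natAbs := by
  rcases lt_trichotomy i j with h1 | h1 | h1
  · rcases (h i j h1).mp hij with h2 | h2
    · exact h2.le
    · rcases h2.2 with h3 | h3 <;> omega
  · subst h1; exact absurd hij (lt_irrefl _)
  · by_contra hle
    push_neg at hle
    exact absurd ((h j i h1).mpr (Or.inl hle)) (lt_asymm hij)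

/-- `M_i = |q|^{-|α_i|} / |τ_{π⁻¹ i}|`. -/
def Mv (q : ℂ) (τ : Fin n → ℂ) (α : Fin n → ℤ) (π : Equiv.Perm (Fin n)) (i : Fin n) : ℝ :=
  (‖q‖ ^ (α i).natAbs)⁻¹ / ‖τ (π.symm i)‖

lemma abs_ptbar (q : ℂ) (τ : Fin n → ℂ) (α : Fin n → ℤ) (π : Equiv.Perm (Fin n)) (i : Fin n) :
    ‖ptbarA q τ α π i‖
      = ‖q‖ ^ α i *
        (if 0 ≤ α i then ‖τ (π.symm i)‖ else (‖τ (π.symm i)‖)⁻¹) := by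
  unfold ptbarA
  rw [norm_mul, norm_zpow]
  congr 1
  split <;> simp [norm_inv]

lemma abs_lt_one_iff {q : ℂ} (hq0 : 0 < ‖q‖) (hq1 : ‖q‖ < 1)
    {τ : Fin n → ℂ} (hτ0 : ∀ i, 0 < ‖τ i‖) (hτ1 : ∀ i, ‖τ i‖ < 1)
    (α : Fin n → ℤ) (π : Equiv.Perm (Fin n)) (i : Fin n) :
    ‖ptbarA q τ α π i‖ < 1 ↔ 0 ≤ α i := by
  rw [abs_ptbar]
  set A := ‖q‖ with hA
  set T := ‖τ (π.symm i)‖ with hT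
  by_cases hs : 0 ≤ α i
  · simp only [hs, if_true, iff_true]
    have h1 : A ^ α i ≤ 1 := by
      obtain ⟨k, hk⟩ := Int.eq_ofNat_of_zero_le hs
      rw [hk, zpow_natCast]
      exact pow_le_one₀ hq0.le hq1.le
    calc A ^ α i * T ≤ 1 * T := by
          apply mul_le_mul_of_nonneg_right h1 (hτ0 _).le
      _ = T := one_mul T
      _ < 1 := hτ1 _
  · simp only [hs, if_false, iff_false, not_lt]
    push_neg at hs
    have h1 : (1:ℝ) ≤ A ^ α i := by
      have hk : α i = -((α i).natAbs : ℤ) := by omega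
      rw [hk, zpow_neg, zpow_natCast]
      exact (one_le_inv₀ (pow_pos hq0 _)).mpr (pow_le_one₀ hq0.le hq1.le)
    have h2 : (1:ℝ) ≤ T⁻¹ := (one_le_inv₀ (hτ0 _)).mpr (hτ1 _).le
    nlinarith


lemma max_abs {q : ℂ} (hq0 : 0 < ‖q‖) (hq1 : ‖q‖ < 1)
    {τ : Fin n → ℂ} (hτ0 : ∀ i, 0 < ‖τ i‖) (hτ1 : ∀ i, ‖τ i‖ < 1)
    (α : Fin n → ℤ) (π : Equiv.Perm (Fin n)) (i : Fin n) :
    max (‖ptbarA q τ α π i‖) (‖ptbarA q τ α π i‖)⁻¹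
      = Mv q τ α π i := by
  unfold Mv
  rw [abs_ptbar]
  have hTpos : 0 < ‖τ (π.symm i)‖ := hτ0 _
  have hT1 : ‖τ (π.symm i)‖ < 1 := hτ1 _
  by_cases hs : 0 ≤ α i
  · obtain ⟨k, hk⟩ := Int.eq_ofNat_of_zero_le hs
    have hnk : (α i).natAbs = k := by omega
    rw [if_pos hs, hnk, hk, zpow_natCast]
    have h1 : ‖q‖ ^ k ≤ 1 := pow_le_one₀ hq0.le hq1.le
    have hxpos : 0 < ‖q‖ ^ k * ‖τ (π.symm i)‖ :=
      mul_pos (pow_pos hq0 _) hTpos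
    have hx1 : ‖q‖ ^ k * ‖τ (π.symm i)‖ ≤ 1 := by nlinarith
    rw [max_eq_right (hx1.trans ((one_le_inv₀ hxpos).mpr hx1))]
    rw [mul_inv, div_eq_mul_inv]
  · push_neg at hs
    obtain ⟨k, hnk⟩ : ∃ k, (α i).natAbs = k := ⟨_, rfl⟩
    have hk : α i = -((k : ℕ) : ℤ) := by omega
    rw [if_neg hs.not_ge, hnk, hk, zpow_neg, zpow_natCast]
    have h1 : (1:ℝ) ≤ (‖q‖ ^ k)⁻¹ :=
      (one_le_inv₀ (pow_pos hq0 _)).mpr (pow_le_one₀ hq0.le hq1.le)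
    have h2 : (1:ℝ) ≤ (‖τ (π.symm i)‖)⁻¹ := (one_le_inv₀ hTpos).mpr hT1.le
    have hx1 : (1:ℝ) ≤ (‖q‖ ^ k)⁻¹ * (‖τ (π.symm i)‖)⁻¹ := by
      nlinarith
    have hxpos : (0:ℝ) < (‖q‖ ^ k)⁻¹ * (‖τ (π.symm i)‖)⁻¹ :=
      lt_of_lt_of_le one_pos hx1
    rw [max_eq_left (((inv_le_one₀ hxpos).mpr hx1).trans hx1)]
    rw [div_eq_mul_inv]

lemma Mv_lt {q : ℂ} (hq0 : 0 < ‖q‖) (hq1 : ‖q‖ < 1)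
    {τ : Fin n → ℂ} (hτ0 : ∀ i, 0 < ‖τ i‖)
    (hτmono : StrictMono fun i => ‖τ i‖)
    {α : Fin n → ℤ} {π : Equiv.Perm (Fin n)} (ha : SahiPerm α π)
    {i j : Fin n} (hij : π.symm i < π.symm j) :
    Mv q τ α π j < Mv q τ α π i := by
  have hN := sahi_natAbs_le ha hij
  unfold Mv
  have h1 : ‖q‖ ^ (α i).natAbs ≤ ‖q‖ ^ (α j).natAbs :=
    pow_le_pow_of_le_one hq0.le hq1.le hN
  have h2 : ‖τ (π.symm i)‖ < ‖τ (π.symm j)‖ := hτmono hij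
  have hstep : (‖q‖ ^ (α j).natAbs)⁻¹ / ‖τ (π.symm j)‖
      ≤ (‖q‖ ^ (α i).natAbs)⁻¹ / ‖τ (π.symm j)‖ := by
    gcongr
  refine hstep.trans_lt ?_
  exact div_lt_div_of_pos_left (inv_pos.mpr (pow_pos hq0 _)) (hτ0 _) h2

end Stmt13Aux

/-- The map `α ↦ ᾱ` from `ℤⁿ` to `(ℂ*)ⁿ` is injective. -/
theorem stmt13 {n : ℕ} (q : ℂ) (hq0 : 0 < ‖q‖) (hq1 : ‖q‖ < 1)
    (τ : Fin n → ℂ) (hτ : TauChain τ) (α β : Fin n → ℤ)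
    (πa πb : Equiv.Perm (Fin n)) (ha : SahiPerm α πa) (hb : SahiPerm β πb)
    (h : ptbarA q τ α πa = ptbarA q τ β πb) : α = β := by
  obtain ⟨hτ0, hτmono, hτ1⟩ := hτ
  have habs : ∀ i, ‖ptbarA q τ α πa i‖ = ‖ptbarA q τ β πb i‖ :=
    fun i => by rw [h]
  have hsgn : ∀ i, (0 ≤ α i ↔ 0 ≤ β i) := fun i => by
    rw [← Stmt13Aux.abs_lt_one_iff hq0 hq1 hτ0 hτ1 α πa i, habs i,
      Stmt13Aux.abs_lt_one_iff hq0 hq1 hτ0 hτ1 β πb i]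
  have hM : ∀ i, Stmt13Aux.Mv q τ α πa i = Stmt13Aux.Mv q τ β πb i := fun i => by
    rw [← Stmt13Aux.max_abs hq0 hq1 hτ0 hτ1 α πa i, habs i,
      Stmt13Aux.max_abs hq0 hq1 hτ0 hτ1 β πb i]
  have key : ∀ i j, πa.symm i < πa.symm j ↔ πb.symm i < πb.symm j := by
    intro i j
    constructor
    · intro hij
      have h1 : Stmt13Aux.Mv q τ β πb j < Stmt13Aux.Mv q τ β πb i := by
        rw [← hM, ← hM]; exact Stmt13Aux.Mv_lt hq0 hq1 hτ0 hτmono ha hij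
      rcases lt_trichotomy (πb.symm i) (πb.symm j) with hc | hc | hc
      · exact hc
      · exact absurd h1 (by rw [πb.symm.injective hc]; exact lt_irrefl _)
      · exact absurd (Stmt13Aux.Mv_lt hq0 hq1 hτ0 hτmono hb hc) (lt_asymm h1)
    · intro hij
      have h1 : Stmt13Aux.Mv q τ α πa j < Stmt13Aux.Mv q τ α πa i := by
        rw [hM, hM]; exact Stmt13Aux.Mv_lt hq0 hq1 hτ0 hτmono hb hij
      rcases lt_trichotomy (πa.symm i) (πa.symm j) with hc | hc | hc
      · exact hc
      · exact absurd h1 (by rw [πa.symm.injective hc]; exact lt_irrefl _)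
      · exact absurd (Stmt13Aux.Mv_lt hq0 hq1 hτ0 hτmono ha hc) (lt_asymm h1)
  have hmono : StrictMono fun x => πa.symm (πb x) := by
    intro a b hab
    exact (key (πb a) (πb b)).mpr (by simpa using hab)
  have hid : ∀ x, πa.symm (πb x) = x := by
    let e : Fin n ≃o Fin n :=
      { toEquiv := πb.trans πa.symm, map_rel_iff' := @fun a b => hmono.le_iff_le }
    have he : e = OrderIso.refl (Fin n) := Subsingleton.elim _ _
    intro x
    have hx : e x = x := by rw [he]; rfl
    exact hx
  have hperm : πa = πb := by
    apply Equiv.ext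
    intro x
    have := congrArg πa (hid x)
    rw [Equiv.apply_symm_apply] at this
    exact this.symm
  rw [← hperm] at h
  funext i
  have hi := congrFun h i
  unfold ptbarA at hi
  have hτne : τ (πa.symm i) ≠ 0 := by
    intro h0
    have := hτ0 (πa.symm i)
    rw [h0] at this
    simp at this
  have hcond : (if 0 ≤ β i then τ (πa.symm i) else (τ (πa.symm i))⁻¹)
      = (if 0 ≤ α i then τ (πa.symm i) else (τ (πa.symm i))⁻¹) := by
    by_cases hs : 0 ≤ α i
    · rw [if_pos hs, if_pos ((hsgn i).mp hs)]
    · rw [if_neg hs, if_neg (fun hb' => hs ((hsgn i).mpr hb'))]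
  rw [hcond] at hi
  have hune : (if 0 ≤ α i then τ (πa.symm i) else (τ (πa.symm i))⁻¹) ≠ 0 := by
    split
    · exact hτne
    · exact inv_ne_zero hτne
  have hq : q ^ α i = q ^ β i := mul_right_cancel₀ hune hi
  have habseq : ‖q‖ ^ α i = ‖q‖ ^ β i := by
    rw [← norm_zpow, ← norm_zpow, hq]
  exact zpow_right_injective₀ hq0 (ne_of_lt hq1) habseq
end
end

section
/- Let $0 < |q| < 1$ and $\tau \in \mathbb{C}^n$ with $0 < |\tau_1| < \cdots < |\tau_n| < 1$. For every $\alpha \in \mathbb{Z}^n$ and every root $\beta$ of the root system $B_n$ (i.e., $\beta = \pm e_i \pm e_j$ with $i \ne j$, or $\beta = \pm e_i$), the evaluation $\overline{\alpha}^{\,\beta} := \prod_i \overline{\alpha}_i^{\beta_i}$ satisfies $|\overline{\alpha}^{\,\beta}| \ne 1$. -/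
noncomputable section

/-- `β ∈ ℤⁿ` is a root of the root system `Bₙ`: `β = ±eᵢ` or `β = ±eᵢ ± eⱼ` (`i ≠ j`). -/
def IsBRoot {n : ℕ} (β : Fin n → ℤ) : Prop :=
  (∃ (i : Fin n) (a : ℤ), (a = 1 ∨ a = -1) ∧ β = fun k => if k = i then a else 0) ∨
  (∃ (i j : Fin n), i ≠ j ∧ ∃ a b : ℤ, (a = 1 ∨ a = -1) ∧ (b = 1 ∨ b = -1) ∧
    β = fun k => if k = i then a else if k = j then b else 0)

lemma aux1 {x : ℝ} (hx0 : 0 < x) (hx1 : x ≠ 1) {e : ℤ}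
    (he : e = 1 ∨ e = -1) : x ^ e ≠ 1 := by
  rcases he with rfl | rfl
  · simpa using hx1
  · simp only [zpow_neg, zpow_one, ne_eq, inv_eq_one]
    exact hx1

lemma aux2 {x y : ℝ} (hx0 : 0 < x) (hx1 : x < 1) (hy0 : 0 < y) (hy1 : y < 1)
    (hxy : x ≠ y) {e f : ℤ} (he : e = 1 ∨ e = -1) (hf : f = 1 ∨ f = -1) :
    x ^ e * y ^ f ≠ 1 := by
  have hxy1 : x * y < 1 := by nlinarith
  rcases he with rfl | rfl <;> rcases hf with rfl | rfl <;>
    simp only [zpow_one, zpow_neg, ← mul_inv, ← div_eq_mul_inv, inv_mul_eq_div, ne_eq]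
  · exact ne_of_lt hxy1
  · intro h; exact hxy (by field_simp at h; linarith)
  · intro h; exact hxy (by field_simp at h; linarith)
  · intro h; field_simp at h; nlinarith

lemma sahi_lt {n : ℕ} {α : Fin n → ℤ} {π : Equiv.Perm (Fin n)} (hπ : SahiPerm α π)
    {i j : Fin n} (hij : i ≠ j) (h : (α j).natAbs < (α i).natAbs) :
    π.symm i < π.symm j := by
  rcases lt_or_gt_of_ne hij with h1 | h1
  · exact (hπ i j h1).mpr (Or.inl h)
  · have hne : π.symm i ≠ π.symm j := fun he => hij (π.symm.injective he)
    have h2 : ¬ π.symm j < π.symm i := by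
      rw [hπ j i h1]
      rintro (h2 | ⟨h2, h3 | h3⟩) <;> omega
    exact lt_of_le_of_ne (not_lt.mp h2) hne

lemma abs_ptbarA {n : ℕ} (q : ℂ) (hq0 : 0 < ‖q‖) (τ : Fin n → ℂ)
    (α : Fin n → ℤ) (π : Equiv.Perm (Fin n)) (i : Fin n) :
    ∃ s : ℤ, (s = 1 ∨ s = -1) ∧ ‖ptbarA q τ α π i‖ =
      (‖q‖ ^ (α i).natAbs * ‖τ (π.symm i)‖) ^ s := by
  by_cases h : 0 ≤ α i
  · refine ⟨1, Or.inl rfl, ?_⟩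
    simp only [ptbarA, if_pos h, norm_mul, norm_zpow, zpow_one]
    congr 1
    rw [← zpow_natCast, Int.natAbs_of_nonneg h]
  · refine ⟨-1, Or.inr rfl, ?_⟩
    simp only [ptbarA, if_neg h, norm_mul, norm_zpow, norm_inv]
    rw [zpow_neg, zpow_one, mul_inv]
    congr 2
    rw [← zpow_natCast, ← zpow_neg, Int.ofNat_natAbs_of_nonpos (by omega), neg_neg]

/-- For every `α ∈ ℤⁿ` and every root `β` of `Bₙ`, `|ᾱ^β| ≠ 1`. -/
theorem stmt14 {n : ℕ} (q : ℂ) (hq0 : 0 < ‖q‖) (hq1 : ‖q‖ < 1)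
    (τ : Fin n → ℂ) (hτ : TauChain τ) (α : Fin n → ℤ)
    (π : Equiv.Perm (Fin n)) (hπ : SahiPerm α π) (β : Fin n → ℤ) (hβ : IsBRoot β) :
    ‖∏ i, ptbarA q τ α π i ^ β i‖ ≠ 1 := by
  obtain ⟨hτ0, hτm, hτ1⟩ := hτ
  set r : Fin n → ℝ := fun i => ‖q‖ ^ (α i).natAbs * ‖τ (π.symm i)‖
    with hr
  have hr0 : ∀ i, 0 < r i := fun i =>
    mul_pos (pow_pos hq0 _) (hτ0 _)
  have hr1 : ∀ i, r i < 1 := by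
    intro i
    calc r i ≤ 1 * ‖τ (π.symm i)‖ := by
          apply mul_le_mul_of_nonneg_right _ (le_of_lt (hτ0 _))
          exact pow_le_one₀ (le_of_lt hq0) (le_of_lt hq1)
      _ < 1 := by rw [one_mul]; exact hτ1 _
  -- pairwise distinctness of r
  have hrlt : ∀ i j : Fin n, i ≠ j → (α j).natAbs < (α i).natAbs → r i < r j := by
    intro i j hij h
    have hσ : π.symm i < π.symm j := sahi_lt hπ hij h
    have ht : ‖τ (π.symm i)‖ < ‖τ (π.symm j)‖ := hτm hσ
    have hqp : ‖q‖ ^ (α i).natAbs < ‖q‖ ^ (α j).natAbs :=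
      pow_lt_pow_right_of_lt_one₀ hq0 hq1 h
    exact mul_lt_mul'' hqp ht (le_of_lt (pow_pos hq0 _)) (le_of_lt (hτ0 _))
  have hrne : ∀ i j : Fin n, i ≠ j → r i ≠ r j := by
    intro i j hij
    rcases lt_trichotomy ((α i).natAbs) ((α j).natAbs) with h | h | h
    · exact ne_of_gt (hrlt j i hij.symm h)
    · intro he
      rw [hr] at he
      simp only [h] at he
      have := mul_left_cancel₀ (ne_of_gt (pow_pos hq0 ((α j).natAbs))) he
      exact hij (π.symm.injective (hτm.injective this))
    · exact ne_of_lt (hrlt i j hij h)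
  -- absolute value of each coordinate
  have habs : ∀ i, ∃ s : ℤ, (s = 1 ∨ s = -1) ∧
      ‖ptbarA q τ α π i‖ = r i ^ s := fun i => abs_ptbarA q hq0 τ α π i
  have hA0 : ∀ i, ‖ptbarA q τ α π i‖ ≠ 0 := by
    intro i
    obtain ⟨s, _, hs⟩ := habs i
    rw [hs]
    exact ne_of_gt (zpow_pos (hr0 i) s)
  have hprod : ‖∏ i, ptbarA q τ α π i ^ β i‖ =
      ∏ i, ‖ptbarA q τ α π i‖ ^ β i := by
    rw [norm_prod]
    exact Finset.prod_congr rfl fun i _ => norm_zpow _ _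
  rw [hprod]
  rcases hβ with ⟨i, a, ha, rfl⟩ | ⟨i, j, hij, a, b, ha, hb, rfl⟩
  · rw [Finset.prod_eq_single i ?_ (by simp)]
    · obtain ⟨s, hs, hse⟩ := habs i
      simp only [if_pos rfl]
      rw [hse, ← zpow_mul]
      refine aux1 (hr0 i) (ne_of_lt (hr1 i)) ?_
      rcases hs with rfl | rfl <;> rcases ha with rfl | rfl <;> norm_num
    · intro k _ hk
      simp [hk]
  · have hsplit : ∀ k : Fin n, ‖ptbarA q τ α π k‖ ^
        (if k = i then a else if k = j then b else 0) =
        ‖ptbarA q τ α π k‖ ^ (if k = i then a else 0) *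
        ‖ptbarA q τ α π k‖ ^ (if k = j then b else 0) := by
      intro k
      rw [← zpow_add₀ (hA0 k)]
      congr 1
      by_cases h1 : k = i
      · subst h1
        rw [if_pos rfl, if_pos rfl, if_neg hij]
        ring
      · simp [h1]
    rw [Finset.prod_congr rfl (fun k _ => hsplit k), Finset.prod_mul_distrib]
    rw [Finset.prod_eq_single i (fun k _ hk => by simp [hk]) (by simp),
        Finset.prod_eq_single j (fun k _ hk => by simp [hk]) (by simp)]
    simp only [if_pos rfl]
    obtain ⟨s, hs, hse⟩ := habs i
    obtain ⟨t, ht, hte⟩ := habs j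
    rw [hse, hte, ← zpow_mul, ← zpow_mul]
    refine aux2 (hr0 i) (hr1 i) (hr0 j) (hr1 j) (hrne i j hij) ?_ ?_
    · rcases hs with rfl | rfl <;> rcases ha with rfl | rfl <;> norm_num
    · rcases ht with rfl | rfl <;> rcases hb with rfl | rfl <;> norm_num
end
end

section
/- Let $0 < |q| < 1$, $\tau \in \mathbb{C}^n$ with $0 < |\tau_1| < \cdots < |\tau_n| < 1$, and let $\lambda$ be a partition of length $\le n$ with all $\lambda_i > 0$. Then the symmetric interpolation Laurent polynomial satisfies $R_\lambda(x;q,\tau) = R_{\lambda - \mathbf{1}}(x;q,q\tau) \prod_{i=1}^n \dfrac{(x_i - \tau_n)(x_i^{-1} - \tau_n)}{(\overline{\lambda}_i - \tau_n)(\overline{\lambda}_i^{-1} - \tau_n)}$, where $\mathbf{1} = (1,\ldots,1)$, $\overline{\lambda}_i = q^{\lambda_i}\tau_i$, and $q\tau = (q\tau_1,\ldots,q\tau_n)$. -/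
noncomputable section

/-- `l ∈ ℤⁿ` is a partition: weakly decreasing and nonnegative. -/
def IsPartition {n : ℕ} (l : Fin n → ℤ) : Prop :=
  (∀ i j : Fin n, i ≤ j → l j ≤ l i) ∧ ∀ i, 0 ≤ l i

/-- The action of `σπ ∈ Wₙ = {±1}ⁿ ⋊ Sₙ` on `ℤⁿ`. -/
def actZ {n : ℕ} (ε : Fin n → Bool) (π : Equiv.Perm (Fin n)) (α : Fin n → ℤ) : Fin n → ℤ :=
  fun j => (if ε j then -1 else 1) * α (π.symm j)

/-- `Wₙ`-invariance at the level of coefficients. -/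
def WInv {n : ℕ} (c : (Fin n → ℤ) →₀ ℂ) : Prop :=
  ∀ (ε : Fin n → Bool) (π : Equiv.Perm (Fin n)) (α : Fin n → ℤ), c (actZ ε π α) = c α

/-- Evaluation of the Laurent polynomial `∑_α c_α x^α`. -/
def evalL {n : ℕ} (c : (Fin n → ℤ) →₀ ℂ) (x : Fin n → ℂ) : ℂ :=
  c.sum fun α a => a * ∏ i, x i ^ α i

-- ============ infrastructure ============

abbrev AZ (N : ℕ) : Type := AddMonoidAlgebra ℂ (Fin N → ℤ)

variable {N : ℕ}

def eI (i : Fin N) : Fin N → ℤ := Pi.single i 1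

lemma evalL_single (α : Fin N → ℤ) (a : ℂ) (x : Fin N → ℂ) :
    evalL (AddMonoidAlgebra.single α a : AZ N).coeff x = a * ∏ i, x i ^ α i := by
  unfold evalL
  rw [AddMonoidAlgebra.coeff_single]
  exact Finsupp.sum_single_index (by simp)

/-- `evalL` as an additive hom. -/
def evalLA (x : Fin N → ℂ) : AZ N →+ ℂ where
  toFun c := evalL c.coeff x
  map_zero' := by simp [evalL]
  map_add' c d := by
    show evalL (c + d).coeff x = evalL c.coeff x + evalL d.coeff x
    unfold evalL
    rw [AddMonoidAlgebra.coeff_add]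
    exact Finsupp.sum_add_index' (by simp) (by intros; ring)

lemma evalLA_apply (x : Fin N → ℂ) (c : AZ N) : evalLA x c = evalL c.coeff x := rfl

lemma addHom_mul {R : Type*} [NonUnitalNonAssocSemiring R] (F : AZ N →+ R)
    (h : ∀ (α β : Fin N → ℤ) (a b : ℂ),
      F (AddMonoidAlgebra.single (α + β) (a * b)) = F (AddMonoidAlgebra.single α a) * F (AddMonoidAlgebra.single β b))
    (c d : AZ N) : F (c * d) = F c * F d := by
  have hc : F c = c.coeff.sum fun α a => F (AddMonoidAlgebra.single α a) := by
    conv_lhs => rw [← AddMonoidAlgebra.sum_coeff_single c]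
    exact map_finsuppSum F _ _
  have hd : F d = d.coeff.sum fun β b => F (AddMonoidAlgebra.single β b) := by
    conv_lhs => rw [← AddMonoidAlgebra.sum_coeff_single d]
    exact map_finsuppSum F _ _
  rw [AddMonoidAlgebra.mul_def, map_finsuppSum, hc, hd, Finsupp.sum_mul]
  refine Finsupp.sum_congr fun α _ => ?_
  rw [map_finsuppSum, Finsupp.mul_sum]
  exact Finsupp.sum_congr fun β _ => h α β _ _

lemma evalL_mul {x : Fin N → ℂ} (hx : ∀ i, x i ≠ 0) (c d : AZ N) :
    evalL (c * d).coeff x = evalL c.coeff x * evalL d.coeff x := by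
  refine addHom_mul (evalLA x) (fun α β a b => ?_) c d
  simp only [evalLA_apply, evalL_single]
  rw [show (∏ i, x i ^ (α + β) i) = (∏ i, x i ^ α i) * ∏ i, x i ^ β i by
    rw [← Finset.prod_mul_distrib]
    exact Finset.prod_congr rfl fun i _ => by
      rw [Pi.add_apply, zpow_add₀ (hx i)]]
  ring

lemma evalL_one (x : Fin N → ℂ) : evalL (1 : AZ N).coeff x = 1 := by
  have : (1 : AZ N) = AddMonoidAlgebra.single 0 1 := rfl
  rw [this, evalL_single]; simp

lemma evalL_prod {x : Fin N → ℂ} (hx : ∀ i, x i ≠ 0) {ι : Type*} (s : Finset ι)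
    (f : ι → AZ N) : evalL (∏ i ∈ s, f i : AZ N).coeff x = ∏ i ∈ s, evalL (f i).coeff x := by
  classical
  induction s using Finset.cons_induction with
  | empty => simpa using evalL_one x
  | cons a s ha ih => rw [Finset.prod_cons, Finset.prod_cons, evalL_mul hx, ih]

lemma evalL_sub (c d : AZ N) (x : Fin N → ℂ) :
    evalL (c - d).coeff x = evalL c.coeff x - evalL d.coeff x := map_sub (evalLA x) c d


-- ============ substitution ============

/-- substitute `t` for the `i`-th variable (additive hom). -/
def subT (i : Fin N) (t : ℂ) : AZ N →+ AZ N where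
  toFun c := c.coeff.sum fun α a => AddMonoidAlgebra.single (Function.update α i 0) (a * t ^ α i)
  map_zero' := by simp
  map_add' c d := by
    show Finsupp.sum (c + d).coeff (fun α a => AddMonoidAlgebra.single (Function.update α i 0) (a * t ^ α i))
      = Finsupp.sum c.coeff (fun α a => AddMonoidAlgebra.single (Function.update α i 0) (a * t ^ α i))
      + Finsupp.sum d.coeff (fun α a => AddMonoidAlgebra.single (Function.update α i 0) (a * t ^ α i))
    rw [AddMonoidAlgebra.coeff_add]
    exact Finsupp.sum_add_index' (fun a => by simp)
      (fun a b₁ b₂ => by rw [add_mul, AddMonoidAlgebra.single_add])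

lemma subT_apply (i : Fin N) (t : ℂ) (c : AZ N) :
    subT i t c = c.coeff.sum fun α a => AddMonoidAlgebra.single (Function.update α i 0) (a * t ^ α i) := rfl

lemma subT_single (i : Fin N) (t : ℂ) (α : Fin N → ℤ) (a : ℂ) :
    subT i t (AddMonoidAlgebra.single α a) = AddMonoidAlgebra.single (Function.update α i 0) (a * t ^ α i) := by
  rw [subT_apply, AddMonoidAlgebra.coeff_single]
  exact Finsupp.sum_single_index (by simp)

lemma update_add (α β : Fin N → ℤ) (i : Fin N) :
    Function.update (α + β) i 0 = Function.update α i 0 + Function.update β i 0 := by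
  funext j
  by_cases h : j = i
  · subst h; simp
  · simp [Function.update_of_ne h]

lemma subT_mul (i : Fin N) {t : ℂ} (ht : t ≠ 0) (c d : AZ N) :
    subT i t (c * d) = subT i t c * subT i t d := by
  refine addHom_mul (subT i t) (fun α β a b => ?_) c d
  rw [subT_single, subT_single, subT_single, AddMonoidAlgebra.single_mul_single,
    update_add]
  congr 1
  rw [Pi.add_apply, zpow_add₀ ht]
  ring

-- ============ the W action ============

def actE (ε : Fin N → Bool) (π : Equiv.Perm (Fin N)) : (Fin N → ℤ) ≃+ (Fin N → ℤ) where
  toFun := actZ ε π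
  invFun := actZ (ε ∘ π) π.symm
  left_inv α := by
    funext j
    simp only [actZ, Function.comp_apply, Equiv.symm_symm, Equiv.apply_symm_apply,
      Equiv.symm_apply_apply]
    by_cases h : ε (π j) = true <;> simp [h]
  right_inv α := by
    funext j
    simp only [actZ, Function.comp_apply, Equiv.apply_symm_apply]
    cases h : ε j <;> simp
  map_add' α β := by
    funext j
    simp only [actZ, Pi.add_apply]
    ring

lemma actE_apply (ε : Fin N → Bool) (π : Equiv.Perm (Fin N)) (α : Fin N → ℤ) :
    actE ε π α = actZ ε π α := rfl

/-- The ring action of a signed permutation on the Laurent polynomial ring. -/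
def Tact (σ : (Fin N → ℤ) ≃+ (Fin N → ℤ)) : AZ N ≃ₐ[ℂ] AZ N :=
  AddMonoidAlgebra.domCongr ℂ ℂ σ

lemma Tact_apply (σ : (Fin N → ℤ) ≃+ (Fin N → ℤ)) (c : AZ N) (β : Fin N → ℤ) :
    (Tact σ c).coeff β = c.coeff (σ.symm β) := AddMonoidAlgebra.coeff_domCongr (R := ℂ) (A := ℂ) σ c β

lemma Tact_single (σ : (Fin N → ℤ) ≃+ (Fin N → ℤ)) (α : Fin N → ℤ) (a : ℂ) :
    Tact σ (AddMonoidAlgebra.single α a) = AddMonoidAlgebra.single (σ α) a :=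
  AddMonoidAlgebra.domCongr_single (R := ℂ) (A := ℂ) σ α a

lemma winv_iff (c : AZ N) :
    WInv c.coeff ↔ ∀ (ε : Fin N → Bool) (π : Equiv.Perm (Fin N)), Tact (actE ε π) c = c := by
  constructor
  · intro h ε π
    ext β
    rw [Tact_apply]
    have h2 := h ε π ((actE ε π).symm β)
    rw [show actZ ε π ((actE ε π).symm β) = β from (actE ε π).apply_symm_apply β] at h2
    exact h2.symm
  · intro h ε π α
    have h2 : (Tact (actE ε π) c).coeff (actZ ε π α) = c.coeff (actZ ε π α) := by rw [h]
    rw [Tact_apply, show (actE ε π).symm (actZ ε π α) = α from (actE ε π).symm_apply_apply α]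
      at h2
    exact h2.symm

-- ============ Ffac ============

def Ffac (i : Fin N) (t : ℂ) : AZ N :=
  AddMonoidAlgebra.single (eI i) (-t) + AddMonoidAlgebra.single (-eI i) (-t) + AddMonoidAlgebra.single 0 (1 + t ^ 2)

lemma eI_ne_zero (i : Fin N) : eI i ≠ 0 := by
  intro h
  have := congrFun h i
  simp [eI] at this

lemma neg_eI_ne_eI (i : Fin N) : -eI i ≠ eI i := by
  intro h
  have := congrFun h i
  simp [eI] at this

lemma Ffac_ne_zero (i : Fin N) {t : ℂ} (ht : t ≠ 0) : Ffac i t ≠ 0 := by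
  intro h
  have h2 : (Ffac i t).coeff (eI i) = 0 := by rw [h]; rfl
  simp only [Ffac, AddMonoidAlgebra.coeff_add, AddMonoidAlgebra.coeff_single, Finsupp.add_apply] at h2
  rw [Finsupp.single_eq_same,
    Finsupp.single_eq_of_ne' (neg_eI_ne_eI i), Finsupp.single_eq_of_ne' (eI_ne_zero i).symm]
    at h2
  simp at h2
  exact ht h2

lemma prod_eI (x : Fin N → ℂ) (i : Fin N) : (∏ j, x j ^ (eI i) j) = x i := by
  rw [Finset.prod_eq_single i (fun j _ hj => by simp [eI, Pi.single_eq_of_ne hj])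
    (by simp)]
  simp [eI]

lemma prod_neg_eI (x : Fin N → ℂ) (i : Fin N) : (∏ j, x j ^ (-eI i) j) = (x i)⁻¹ := by
  rw [Finset.prod_eq_single i (fun j _ hj => by simp [eI, Pi.single_eq_of_ne hj])
    (by simp)]
  simp [eI]

lemma evalL_add (c d : AZ N) (x : Fin N → ℂ) :
    evalL (c + d).coeff x = evalL c.coeff x + evalL d.coeff x := map_add (evalLA x) c d

lemma evalL_Ffac (i : Fin N) (t : ℂ) {x : Fin N → ℂ} (hxi : x i ≠ 0) :
    evalL (Ffac i t).coeff x = (x i - t) * ((x i)⁻¹ - t) := by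
  rw [Ffac, evalL_add, evalL_add]
  rw [evalL_single, evalL_single, evalL_single, prod_eI, prod_neg_eI]
  have : (∏ j, x j ^ (0 : Fin N → ℤ) j) = 1 := by simp
  rw [this]
  field_simp
  ring
-- ============ division by linear factors ============

def Xi (i : Fin N) : AZ N := AddMonoidAlgebra.single (eI i) 1

def CC (a : ℂ) : AZ N := AddMonoidAlgebra.single (0 : Fin N → ℤ) a

def qn (i : Fin N) (a : ℂ) : ℕ → AZ N := fun k =>
  ∑ j ∈ Finset.range k, AddMonoidAlgebra.single ((j : ℤ) • eI i) (a ^ (k - 1 - j))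

lemma qn_succ (i : Fin N) (a : ℂ) (k : ℕ) :
    qn i a (k + 1) = CC a * qn i a k + (AddMonoidAlgebra.single ((k : ℤ) • eI i) 1 : AZ N) := by
  unfold qn
  rw [Finset.sum_range_succ]
  congr 1
  · rw [Finset.mul_sum]
    refine Finset.sum_congr rfl fun j hj => ?_
    rw [Finset.mem_range] at hj
    rw [CC, AddMonoidAlgebra.single_mul_single, zero_add]
    congr 1
    rw [show k + 1 - 1 - j = (k - 1 - j) + 1 by omega, pow_succ]
    ring
  · simp

lemma qn_key (i : Fin N) (a : ℂ) (k : ℕ) :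
    (Xi i - CC a) * qn i a k = (AddMonoidAlgebra.single ((k : ℤ) • eI i) 1 : AZ N) - CC (a ^ k) := by
  induction k with
  | zero =>
    have h1 : qn i a 0 = 0 := by simp [qn]
    have h2 : ((0 : ℕ) : ℤ) • eI i = (0 : Fin N → ℤ) := by simp
    rw [h1, mul_zero, h2, pow_zero]
    rw [CC]
    simp
  | succ k ih =>
    rw [qn_succ, mul_add, ← mul_assoc, mul_comm (Xi i - CC a) (CC a), mul_assoc, ih]
    rw [sub_mul, mul_sub]
    simp only [Xi, CC]
    simp only [AddMonoidAlgebra.single_mul_single]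
    rw [show (0 : Fin N → ℤ) + (k : ℤ) • eI i = (k : ℤ) • eI i from zero_add _,
      show (0 : Fin N → ℤ) + 0 = 0 from zero_add _,
      show eI i + (k : ℤ) • eI i = ((k + 1 : ℕ) : ℤ) • eI i by
        push_cast; rw [add_smul, one_smul, add_comm],
      mul_one, one_mul, ← pow_succ']
    abel

def qz (i : Fin N) (a : ℂ) : ℤ → AZ N := fun k =>
  if 0 ≤ k then qn i a k.toNat
  else -((AddMonoidAlgebra.single (k • eI i) (a ^ k) : AZ N) * qn i a (-k).toNat)

lemma qz_key (i : Fin N) {a : ℂ} (ha : a ≠ 0) (k : ℤ) :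
    (Xi i - CC a) * qz i a k = (AddMonoidAlgebra.single (k • eI i) 1 : AZ N) - CC (a ^ k) := by
  unfold qz
  by_cases hk : 0 ≤ k
  · rw [if_pos hk, qn_key]
    rw [show ((k.toNat : ℤ)) = k from Int.toNat_of_nonneg hk,
      show a ^ (k.toNat : ℕ) = a ^ k by rw [← zpow_natCast, Int.toNat_of_nonneg hk]]
  · rw [if_neg hk]
    have hm : (((-k).toNat : ℤ)) = -k := Int.toNat_of_nonneg (by omega)
    rw [mul_neg, ← mul_assoc, mul_comm (Xi i - CC a) _, mul_assoc, qn_key, hm]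
    rw [mul_sub, AddMonoidAlgebra.single_mul_single, CC,
      AddMonoidAlgebra.single_mul_single]
    have e1 : k • eI i + -k • eI i = (0 : Fin N → ℤ) := by
      rw [← add_smul]
      simp
    have e2 : a ^ k * a ^ (-k) = 1 := by
      rw [← zpow_add₀ ha]
      simp
    have e3 : a ^ k * 1 = a ^ k := mul_one _
    rw [e1, show a ^ ((-k).toNat : ℕ) = a ^ (-k : ℤ) by rw [← zpow_natCast, hm], e2, e3,
      add_zero]
    rw [neg_sub]
    rfl

lemma update_add_smul (α : Fin N → ℤ) (i : Fin N) :
    Function.update α i 0 + (α i) • eI i = α := by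
  funext j
  by_cases h : j = i
  · subst h
    simp [eI]
  · simp [Function.update_of_ne h, eI, Pi.single_eq_of_ne h]

lemma div_linear (i : Fin N) {a : ℂ} (ha : a ≠ 0) {c : AZ N} (hc : subT i a c = 0) :
    ∃ g : AZ N, c = (Xi i - CC a) * g := by
  refine ⟨c.coeff.sum fun α v => (AddMonoidAlgebra.single (Function.update α i 0) v : AZ N) * qz i a (α i), ?_⟩
  rw [Finsupp.mul_sum]
  symm
  have step : ∀ (α : Fin N → ℤ) (v : ℂ),
      (Xi i - CC a) * ((AddMonoidAlgebra.single (Function.update α i 0) v : AZ N) * qz i a (α i))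
      = (AddMonoidAlgebra.single α v : AZ N) - AddMonoidAlgebra.single (Function.update α i 0) (v * a ^ α i) := by
    intro α v
    rw [← mul_assoc, mul_comm (Xi i - CC a) _, mul_assoc, qz_key i ha, mul_sub,
      AddMonoidAlgebra.single_mul_single, CC, AddMonoidAlgebra.single_mul_single,
      update_add_smul, mul_one, add_zero]
  calc Finsupp.sum c.coeff (fun α v => (Xi i - CC a) *
        ((AddMonoidAlgebra.single (Function.update α i 0) v : AZ N) * qz i a (α i)))
      = Finsupp.sum c.coeff (fun α v => (AddMonoidAlgebra.single α v : AZ N)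
          - AddMonoidAlgebra.single (Function.update α i 0) (v * a ^ α i)) := by
        exact Finsupp.sum_congr fun α _ => step α (c.coeff α)
    _ = Finsupp.sum c.coeff (fun α v => (AddMonoidAlgebra.single α v : AZ N)) - subT i a c := by
        rw [subT_apply, ← Finsupp.sum_sub]
    _ = c := by rw [hc, sub_zero, AddMonoidAlgebra.sum_coeff_single]
-- ============ substitution computations ============

lemma update_eq_self_of_zero {α : Fin N → ℤ} {j : Fin N} (h : α j = 0) :
    Function.update α j 0 = α := by
  rw [← h]
  exact Function.update_eq_self j α

lemma subT_single_of_zero {j : Fin N} (t : ℂ) {α : Fin N → ℤ} {a : ℂ} (h : α j = 0) :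
    subT j t (AddMonoidAlgebra.single α a) = AddMonoidAlgebra.single α a := by
  rw [subT_single, update_eq_self_of_zero h, h, zpow_zero, mul_one]

lemma subT_Xi_sub_CC (i : Fin N) (b a : ℂ) :
    subT i b (Xi i - CC a) = CC (b - a) := by
  rw [map_sub, Xi, CC, subT_single, subT_single]
  have h1 : Function.update (eI i) i 0 = (0 : Fin N → ℤ) := by
    funext j
    by_cases h : j = i
    · subst h; simp
    · simp [Function.update_of_ne h, eI, Pi.single_eq_of_ne h]
  have h2 : Function.update (0 : Fin N → ℤ) i 0 = (0 : Fin N → ℤ) :=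
    update_eq_self_of_zero rfl
  rw [h1, h2, show eI i i = 1 by simp [eI], show (0 : Fin N → ℤ) i = 0 from rfl,
    zpow_one, zpow_zero, one_mul, mul_one, CC, ← AddMonoidAlgebra.single_sub]

lemma subT_Ffac {i j : Fin N} (hij : j ≠ i) (t s : ℂ) :
    subT j t (Ffac i s) = Ffac i s := by
  have hei : eI i j = 0 := by simp [eI, Pi.single_eq_of_ne hij]
  rw [Ffac, map_add, map_add, subT_single_of_zero t hei,
    subT_single_of_zero t (show (-eI i) j = 0 by simp [hei]),
    subT_single_of_zero t (show (0 : Fin N → ℤ) j = 0 from rfl)]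

lemma CC_ne_zero {a : ℂ} (ha : a ≠ 0) : CC a ≠ (0 : AZ N) := by
  rw [CC]
  exact fun H => ha (AddMonoidAlgebra.single_eq_zero.mp H)

lemma Ffac_key (i : Fin N) {t : ℂ} (ht : t ≠ 0) :
    Ffac i t = AddMonoidAlgebra.single (-eI i) (-t) * ((Xi i - CC t) * (Xi i - CC t⁻¹)) := by
  have htt : t * t⁻¹ = 1 := mul_inv_cancel₀ ht
  simp only [Ffac, Xi, CC, mul_sub, sub_mul, AddMonoidAlgebra.single_mul_single]
  simp only [mul_one, one_mul, neg_mul, htt, add_zero, zero_add, neg_add_cancel_left,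
    neg_add_cancel, AddMonoidAlgebra.single_neg, neg_neg, pow_two]
  abel_nf
  simp [AddMonoidAlgebra.single_add, mul_comm]
  abel

lemma div_quad (i : Fin N) {t : ℂ} (ht : t ≠ 0) (ht2 : t ^ 2 ≠ 1) {c : AZ N}
    (h1 : subT i t c = 0) (h2 : subT i t⁻¹ c = 0) :
    ∃ h : AZ N, c = Ffac i t * h := by
  obtain ⟨g, hg⟩ := div_linear i ht h1
  have hsub : subT i t⁻¹ g = 0 := by
    rw [hg, subT_mul i (inv_ne_zero ht), subT_Xi_sub_CC] at h2
    have hne : CC (t⁻¹ - t) ≠ (0 : AZ N) := by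
      refine CC_ne_zero (sub_ne_zero.mpr fun hinv => ht2 ?_)
      rw [pow_two]
      nth_rewrite 1 [← hinv]
      exact inv_mul_cancel₀ ht
    exact (mul_eq_zero.mp h2).resolve_left hne
  obtain ⟨h', hh⟩ := div_linear i (inv_ne_zero ht) hsub
  refine ⟨AddMonoidAlgebra.single (eI i) (-t⁻¹) * h', ?_⟩
  rw [hh] at hg
  rw [hg, Ffac_key i ht]
  rw [show AddMonoidAlgebra.single (-eI i) (-t) * ((Xi i - CC t) * (Xi i - CC t⁻¹)) *
      (AddMonoidAlgebra.single (eI i) (-t⁻¹) * h')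
    = (AddMonoidAlgebra.single (-eI i) (-t) * AddMonoidAlgebra.single (eI i) (-t⁻¹)) *
      ((Xi i - CC t) * ((Xi i - CC t⁻¹) * h')) by ring]
  rw [AddMonoidAlgebra.single_mul_single]
  rw [show -eI i + eI i = (0 : Fin N → ℤ) by abel, show -t * -t⁻¹ = 1 by
    rw [neg_mul_neg]; exact mul_inv_cancel₀ ht]
  rw [show AddMonoidAlgebra.single (0 : Fin N → ℤ) (1 : ℂ) = (1 : AZ N) from rfl, one_mul]

-- ============ degrees ============

def DegLe (c : AZ N) (D : ℕ) : Prop := ∀ α ∈ c.coeff.support, wtZ α ≤ D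

lemma wtZ_update (α : Fin N → ℤ) (i : Fin N) (v : ℤ) :
    wtZ (Function.update α i v) + (α i).natAbs = wtZ α + v.natAbs := by
  unfold wtZ
  rw [show (∑ j, ((Function.update α i v) j).natAbs)
      = ∑ j, Function.update (fun j => (α j).natAbs) i v.natAbs j from
    Finset.sum_congr rfl fun j _ => by
      by_cases h : j = i
      · subst h; simp
      · simp [Function.update_of_ne h]]
  rw [Finset.sum_update_of_mem (Finset.mem_univ i)]
  rw [Finset.sum_eq_sum_sdiff_singleton_add (Finset.mem_univ i) fun j => (α j).natAbs]
  omega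

lemma wtZ_add_le (α β : Fin N → ℤ) : wtZ (α + β) ≤ wtZ α + wtZ β := by
  unfold wtZ
  rw [← Finset.sum_add_distrib]
  exact Finset.sum_le_sum fun i _ => by
    rw [Pi.add_apply]
    exact Int.natAbs_add_le _ _

lemma DegLe_mul {c d : AZ N} {D E : ℕ} (hc : DegLe c D) (hd : DegLe d E) :
    DegLe (c * d) (D + E) := by
  intro α hα
  have h := AddMonoidAlgebra.support_coeff_mul_subset c d hα
  rw [Finset.mem_add] at h
  obtain ⟨a, ha, b, hb, rfl⟩ := h
  calc wtZ (a + b) ≤ wtZ a + wtZ b := wtZ_add_le a b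
    _ ≤ D + E := Nat.add_le_add (hc a ha) (hd b hb)

lemma deg_quot {i : Fin N} {t : ℂ} (ht : t ≠ 0) {c h : AZ N} (hch : c = Ffac i t * h)
    {D : ℕ} (hc : DegLe c D) : ∀ α ∈ h.coeff.support, wtZ α + 1 ≤ D := by
  intro α₀ hα₀
  obtain ⟨αs, hαs, hmax⟩ := Finset.exists_max_image h.coeff.support wtZ ⟨α₀, hα₀⟩
  have hzero : ∀ γ : Fin N → ℤ, wtZ αs < wtZ γ → h.coeff γ = 0 := fun γ hγ =>
    Finsupp.notMem_support_iff.mp fun hmem => absurd (hmax γ hmem) (by omega)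
  suffices hkey : wtZ αs + 1 ≤ D by
    have := hmax α₀ hα₀
    omega
  set v : ℤ := if 0 ≤ αs i then αs i + 1 else αs i - 1 with hv
  have hvabs : v.natAbs = (αs i).natAbs + 1 := by
    rcases le_or_gt 0 (αs i) with hs | hs
    · rw [hv, if_pos hs]; omega
    · rw [hv, if_neg (not_le.mpr hs)]; omega
  set β := Function.update αs i v with hβ
  have hwupd := wtZ_update αs i v
  have hwβ : wtZ β = wtZ αs + 1 := by rw [hβ]; omega
  have hformula : c.coeff β = -t * h.coeff (-eI i + β) + (-t * h.coeff (eI i + β)) + (1 + t ^ 2) * h.coeff β := by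
    rw [hch, Ffac, add_mul, add_mul, AddMonoidAlgebra.coeff_add, AddMonoidAlgebra.coeff_add,
      Finsupp.add_apply, Finsupp.add_apply,
      AddMonoidAlgebra.coeff_single_mul_apply, AddMonoidAlgebra.coeff_single_mul_apply,
      AddMonoidAlgebra.coeff_single_mul_apply, neg_zero, zero_add, neg_neg]
  have hA : -eI i + β = Function.update αs i (v - 1) := by
    rw [hβ]
    funext j
    by_cases hj : j = i
    · subst hj
      simp only [Pi.add_apply, Pi.neg_apply, Function.update_self]
      rw [show eI j j = 1 by simp [eI]]
      ring
    · simp only [Pi.add_apply, Pi.neg_apply, Function.update_of_ne hj]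
      rw [show eI i j = 0 by simp [eI, Pi.single_eq_of_ne hj]]
      ring
  have hB : eI i + β = Function.update αs i (v + 1) := by
    rw [hβ]
    funext j
    by_cases hj : j = i
    · subst hj
      simp only [Pi.add_apply, Function.update_self]
      rw [show eI j j = 1 by simp [eI]]
      ring
    · simp only [Pi.add_apply, Function.update_of_ne hj]
      rw [show eI i j = 0 by simp [eI, Pi.single_eq_of_ne hj]]
      ring
  have hhβ : h.coeff β = 0 := hzero β (by omega)
  have hcβ : c.coeff β = -t * h.coeff αs := by
    rcases le_or_gt 0 (αs i) with hs | hs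
    · have hv1 : v - 1 = αs i := by rw [hv, if_pos hs]; ring
      have hupd : Function.update αs i (v - 1) = αs := by
        rw [hv1]; exact Function.update_eq_self i αs
      have hw2 := wtZ_update αs i (v + 1)
      have habs2 : (v + 1).natAbs = (αs i).natAbs + 2 := by
        rw [hv, if_pos hs] at *
        omega
      have hzB : h.coeff (eI i + β) = 0 := by
        rw [hB]
        exact hzero _ (by omega)
      rw [hformula, hA, hupd, hzB, hhβ]
      ring
    · have hv1 : v + 1 = αs i := by rw [hv, if_neg (not_le.mpr hs)]; ring
      have hupd : Function.update αs i (v + 1) = αs := by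
        rw [hv1]; exact Function.update_eq_self i αs
      have hw2 := wtZ_update αs i (v - 1)
      have habs2 : (v - 1).natAbs = (αs i).natAbs + 2 := by
        rw [hv, if_neg (not_le.mpr hs)] at *
        omega
      have hzA : h.coeff (-eI i + β) = 0 := by
        rw [hA]
        exact hzero _ (by omega)
      rw [hformula, hB, hupd, hzA, hhβ]
      ring
  have hne : c.coeff β ≠ 0 := by
    rw [hcβ]
    exact mul_ne_zero (neg_ne_zero.mpr ht) (Finsupp.mem_support_iff.mp hαs)
  have hmem : β ∈ c.coeff.support := Finsupp.mem_support_iff.mpr hne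
  have := hc β hmem
  omega
-- ============ Tact commutation with subT ============

lemma Tact_subT_perm (π : Equiv.Perm (Fin N)) (i : Fin N) (t : ℂ) (c : AZ N) :
    Tact (actE (fun _ => false) π) (subT i t c)
      = subT (π i) t (Tact (actE (fun _ => false) π) c) := by
  induction c using AddMonoidAlgebra.induction_linear with
  | zero => simp
  | add f g hf hg => simp only [map_add, hf, hg]
  | single α a =>
    rw [subT_single, Tact_single, Tact_single, subT_single]
    have hact : ∀ β : Fin N → ℤ, actE (fun _ => false) π β = fun j => β (π.symm j) := by
      intro β
      funext j
      simp [actE_apply, actZ]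
    rw [hact, hact]
    have key : (fun j => Function.update α i 0 (π.symm j))
        = Function.update (fun j => α (π.symm j)) (π i) 0 := by
      funext j
      rw [Function.update_apply, Function.update_apply]
      by_cases hj : j = π i
      · rw [if_pos hj, if_pos (by rw [hj]; exact π.symm_apply_apply i)]
      · rw [if_neg hj, if_neg fun hc => hj (by rw [← hc, Equiv.apply_symm_apply])]
    rw [key]
    simp [Equiv.symm_apply_apply]

def flipB (i : Fin N) : Fin N → Bool := fun j => decide (j = i)

lemma Tact_subT_flip (i : Fin N) (t : ℂ) (c : AZ N) :
    subT i t (Tact (actE (flipB i) (Equiv.refl (Fin N))) c)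
      = Tact (actE (flipB i) (Equiv.refl (Fin N))) (subT i t⁻¹ c) := by
  induction c using AddMonoidAlgebra.induction_linear with
  | zero => simp
  | add f g hf hg => simp only [map_add, hf, hg]
  | single α a =>
    rw [Tact_single, subT_single, subT_single, Tact_single]
    have hact : ∀ β : Fin N → ℤ,
        actE (flipB i) (Equiv.refl (Fin N)) β
          = fun j => (if j = i then (-1 : ℤ) else 1) * β j := by
      intro β
      funext j
      simp [actE_apply, actZ, flipB]
    rw [hact, hact]
    have key : (fun j => (if j = i then (-1 : ℤ) else 1) * Function.update α i 0 j)
        = Function.update (fun j => (if j = i then (-1 : ℤ) else 1) * α j) i 0 := by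
      funext j
      rw [Function.update_apply, Function.update_apply]
      by_cases hj : j = i <;> simp [hj]
    have hexp : (if i = i then (-1 : ℤ) else 1) * α i = -α i := by
      rw [if_pos rfl]; ring
    rw [key]
    congr 1
    show a * t ^ ((if i = i then (-1 : ℤ) else 1) * α i) = a * t⁻¹ ^ α i
    rw [hexp, zpow_neg, ← inv_zpow]

-- ============ Tact on Ffac, Fprod ============

lemma Tact_Ffac (ε : Fin N → Bool) (π : Equiv.Perm (Fin N)) (i : Fin N) (t : ℂ) :
    Tact (actE ε π) (Ffac i t) = Ffac (π i) t := by
  have h1 : actE ε π (eI i) = (if ε (π i) then -eI (π i) else eI (π i)) := by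
    funext j
    have hsymm : π.symm j = i ↔ j = π i := by
      constructor
      · intro hh; rw [← hh, Equiv.apply_symm_apply]
      · intro hh; rw [hh, Equiv.symm_apply_apply]
    by_cases hj : j = π i
    · subst hj
      simp only [actE_apply, actZ, eI]
      rw [show (Equiv.symm π) (π i) = i from π.symm_apply_apply i]
      by_cases hε : ε (π i) = true <;> simp [hε]
    · have hne : π.symm j ≠ i := fun hh => hj (hsymm.mp hh)
      simp only [actE_apply, actZ, eI]
      rw [Pi.single_eq_of_ne hne, mul_zero]
      by_cases hε : ε (π i) = true <;> simp [hε, Pi.single_eq_of_ne hj]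
  have h2 : actE ε π (-eI i) = (if ε (π i) then eI (π i) else -eI (π i)) := by
    have := map_neg (actE ε π) (eI i)
    rw [h1] at this
    rw [this]
    by_cases hε : ε (π i) = true <;> simp [hε]
  have h0 : actE ε π (0 : Fin N → ℤ) = 0 := map_zero _
  rw [Ffac, map_add, map_add, Tact_single, Tact_single, Tact_single, h0, h1, h2]
  by_cases hε : ε (π i) = true
  · rw [if_pos hε, if_pos hε, Ffac]
    abel
  · rw [if_neg hε, if_neg hε, Ffac]

def Fprod (t : ℂ) : AZ N := ∏ i, Ffac i t

lemma Tact_Fprod (ε : Fin N → Bool) (π : Equiv.Perm (Fin N)) (t : ℂ) :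
    Tact (actE ε π) (Fprod t : AZ N) = Fprod t := by
  unfold Fprod
  rw [map_prod]
  simp_rw [Tact_Ffac]
  exact Equiv.prod_comp π fun i => Ffac i t

lemma Fprod_ne_zero {t : ℂ} (ht : t ≠ 0) : (Fprod t : AZ N) ≠ 0 :=
  Finset.prod_ne_zero_iff.mpr fun i _ => Ffac_ne_zero i ht

lemma wtZ_zero : wtZ (0 : Fin N → ℤ) = 0 := by simp [wtZ]

lemma wtZ_eI (i : Fin N) : wtZ (eI i) = 1 := by
  have h : eI i = Function.update (0 : Fin N → ℤ) i 1 := by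
    funext j
    by_cases hj : j = i
    · subst hj; simp [eI]
    · simp [eI, Pi.single_eq_of_ne hj, Function.update_of_ne hj]
  have := wtZ_update (0 : Fin N → ℤ) i 1
  rw [← h] at this
  simp only [wtZ_zero, Pi.zero_apply, Int.natAbs_zero, Int.natAbs_one, add_zero,
    zero_add] at this
  exact this

lemma wtZ_neg (α : Fin N → ℤ) : wtZ (-α) = wtZ α := by
  unfold wtZ
  exact Finset.sum_congr rfl fun i _ => by simp

lemma DegLe_single {α : Fin N → ℤ} {a : ℂ} {D : ℕ} (h : wtZ α ≤ D) :
    DegLe (AddMonoidAlgebra.single α a : AZ N) D := fun β hβ => by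
  rw [AddMonoidAlgebra.coeff_single] at hβ
  rw [Finset.mem_singleton.mp (Finsupp.support_single_subset hβ)]
  exact h

lemma DegLe_add {c d : AZ N} {D : ℕ} (hc : DegLe c D) (hd : DegLe d D) :
    DegLe (c + d) D := fun β hβ => by
  rw [AddMonoidAlgebra.coeff_add] at hβ
  rcases Finset.mem_union.mp (Finsupp.support_add hβ) with h | h
  · exact hc β h
  · exact hd β h

lemma DegLe_Ffac (i : Fin N) (t : ℂ) : DegLe (Ffac i t) 1 := by
  rw [Ffac]
  refine DegLe_add (DegLe_add (DegLe_single ?_) (DegLe_single ?_)) (DegLe_single ?_)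
  · rw [wtZ_eI]
  · rw [wtZ_neg, wtZ_eI]
  · rw [wtZ_zero]; omega

lemma DegLe_one : DegLe (1 : AZ N) 0 := by
  have : (1 : AZ N) = AddMonoidAlgebra.single 0 1 := rfl
  rw [this]
  exact DegLe_single (by rw [wtZ_zero])

lemma DegLe_Fprod (t : ℂ) : DegLe (Fprod t : AZ N) N := by
  have gen : ∀ s : Finset (Fin N), DegLe (∏ i ∈ s, Ffac i t : AZ N) s.card := by
    intro s
    induction s using Finset.cons_induction with
    | empty => simpa using DegLe_one
    | cons a s ha ih =>
      rw [Finset.prod_cons, Finset.card_cons]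
      have := DegLe_mul (DegLe_Ffac a t) ih
      rwa [add_comm 1 s.card] at this
  have := gen Finset.univ
  rwa [Finset.card_univ, Fintype.card_fin] at this

lemma evalL_Fprod (t : ℂ) {x : Fin N → ℂ} (hx : ∀ i, x i ≠ 0) :
    evalL (Fprod t : AZ N).coeff x = ∏ i, (x i - t) * ((x i)⁻¹ - t) := by
  rw [Fprod, evalL_prod hx]
  exact Finset.prod_congr rfl fun i _ => evalL_Ffac i t (hx i)

-- ============ restriction to the last variable ============

def resC (t : ℂ) (c : AZ (N + 1)) : AZ N :=
  c.coeff.sum fun α a =>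
    AddMonoidAlgebra.single (fun j : Fin N => α j.castSucc) (a * t ^ α (Fin.last N))

lemma evalL_resC (t : ℂ) (c : AZ (N + 1)) (x : Fin N → ℂ) :
    evalL (resC t c).coeff x = evalL c.coeff (Fin.snoc x t) := by
  rw [resC, show evalL (c.coeff.sum fun α a => AddMonoidAlgebra.single
      (fun j : Fin N => α j.castSucc) (a * t ^ α (Fin.last N))).coeff x
    = evalLA x (c.coeff.sum fun α a => AddMonoidAlgebra.single
      (fun j : Fin N => α j.castSucc) (a * t ^ α (Fin.last N))) from rfl,
    map_finsuppSum]
  unfold evalL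
  refine Finsupp.sum_congr fun α _ => ?_
  rw [evalLA_apply, evalL_single, Fin.prod_univ_castSucc]
  simp only [Fin.snoc_castSucc, Fin.snoc_last]
  ring

lemma DegLe_resC (t : ℂ) {c : AZ (N + 1)} {D : ℕ} (hc : DegLe c D) :
    DegLe (resC t c) D := by
  intro β hβ
  rw [resC, AddMonoidAlgebra.coeff_finsuppSum] at hβ
  simp only [AddMonoidAlgebra.coeff_single] at hβ
  have h := Finsupp.support_sum hβ
  rw [Finset.mem_biUnion] at h
  obtain ⟨α, hα, hmem⟩ := h
  rw [Finset.mem_singleton.mp (Finsupp.support_single_subset hmem)]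
  calc wtZ (fun j : Fin N => α j.castSucc) = ∑ j : Fin N, (α j.castSucc).natAbs := rfl
    _ ≤ wtZ α := by unfold wtZ; rw [Fin.sum_univ_castSucc]; omega
    _ ≤ D := hc α hα
-- ============ extension of W elements to N+1 variables ============

def extPerm (π : Equiv.Perm (Fin N)) : Equiv.Perm (Fin (N + 1)) :=
  (finSuccEquivLast.trans π.optionCongr).trans finSuccEquivLast.symm

lemma extPerm_castSucc (π : Equiv.Perm (Fin N)) (j : Fin N) :
    extPerm π j.castSucc = (π j).castSucc := by
  simp [extPerm]

lemma extPerm_last (π : Equiv.Perm (Fin N)) : extPerm π (Fin.last N) = Fin.last N := by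
  simp [extPerm]

lemma extPerm_symm_castSucc (π : Equiv.Perm (Fin N)) (j : Fin N) :
    (extPerm π).symm j.castSucc = (π.symm j).castSucc := by
  rw [Equiv.symm_apply_eq, extPerm_castSucc, Equiv.apply_symm_apply]

lemma extPerm_symm_last (π : Equiv.Perm (Fin N)) :
    (extPerm π).symm (Fin.last N) = Fin.last N := by
  rw [Equiv.symm_apply_eq, extPerm_last]

def extB (ε : Fin N → Bool) : Fin (N + 1) → Bool := Fin.snoc ε false

lemma extB_castSucc (ε : Fin N → Bool) (j : Fin N) : extB ε j.castSucc = ε j := by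
  simp [extB]

lemma extB_last (ε : Fin N → Bool) : extB ε (Fin.last N) = false := by
  simp [extB]

lemma actZ_apply (ε : Fin N → Bool) (π : Equiv.Perm (Fin N)) (α : Fin N → ℤ) (j : Fin N) :
    actZ ε π α j = (if ε j then (-1 : ℤ) else 1) * α (π.symm j) := rfl

lemma act_ext_res (ε : Fin N → Bool) (π : Equiv.Perm (Fin N)) (α : Fin (N + 1) → ℤ) :
    (fun j : Fin N => actZ (extB ε) (extPerm π) α j.castSucc)
      = actZ ε π (fun j : Fin N => α j.castSucc) := by
  funext j
  rw [actZ_apply, actZ_apply, extB_castSucc, extPerm_symm_castSucc]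

lemma act_ext_last (ε : Fin N → Bool) (π : Equiv.Perm (Fin N)) (α : Fin (N + 1) → ℤ) :
    actZ (extB ε) (extPerm π) α (Fin.last N) = α (Fin.last N) := by
  rw [actZ_apply, extB_last, extPerm_symm_last]
  simp

lemma act_ext_inv₁ (ε : Fin N → Bool) (π : Equiv.Perm (Fin N)) (α : Fin (N + 1) → ℤ) :
    actZ (extB ε) (extPerm π) (actZ (extB (ε ∘ π)) (extPerm π.symm) α) = α := by
  funext j
  induction j using Fin.lastCases with
  | last =>
    rw [actZ_apply, extB_last, extPerm_symm_last, actZ_apply, extB_last, extPerm_symm_last]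
    simp
  | cast j =>
    rw [actZ_apply, extB_castSucc, extPerm_symm_castSucc, actZ_apply, extB_castSucc,
      extPerm_symm_castSucc]
    simp only [Function.comp_apply, Equiv.symm_symm, Equiv.apply_symm_apply]
    by_cases hε : ε j = true <;> simp [hε]

lemma act_ext_inv₂ (ε : Fin N → Bool) (π : Equiv.Perm (Fin N)) (α : Fin (N + 1) → ℤ) :
    actZ (extB (ε ∘ π)) (extPerm π.symm) (actZ (extB ε) (extPerm π) α) = α := by
  funext j
  induction j using Fin.lastCases with
  | last =>
    rw [actZ_apply, extB_last, extPerm_symm_last, actZ_apply, extB_last, extPerm_symm_last]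
    simp
  | cast j =>
    rw [actZ_apply, extB_castSucc, extPerm_symm_castSucc, actZ_apply, extB_castSucc,
      extPerm_symm_castSucc]
    simp only [Function.comp_apply, Equiv.symm_symm, Equiv.symm_apply_apply,
      Equiv.apply_symm_apply]
    by_cases hε : ε (π j) = true <;> simp [hε]

lemma WInv_resC (t : ℂ) {c : AZ (N + 1)} (hW : WInv c.coeff) : WInv (resC t c).coeff := by
  intro ε π β
  simp only [resC, AddMonoidAlgebra.coeff_finsuppSum, AddMonoidAlgebra.coeff_single]
  rw [Finsupp.sum_apply, Finsupp.sum_apply, Finsupp.sum, Finsupp.sum]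
  refine Finset.sum_nbij' (actZ (extB (ε ∘ π)) (extPerm π.symm))
    (actZ (extB ε) (extPerm π)) ?_ ?_ ?_ ?_ ?_
  · intro α hα
    rw [Finsupp.mem_support_iff] at hα ⊢
    rwa [hW (extB (ε ∘ π)) (extPerm π.symm) α]
  · intro α hα
    rw [Finsupp.mem_support_iff] at hα ⊢
    rwa [hW (extB ε) (extPerm π) α]
  · intro α _
    exact act_ext_inv₁ ε π α
  · intro α _
    exact act_ext_inv₂ ε π α
  · intro α _
    rw [Finsupp.single_apply, Finsupp.single_apply]
    rw [hW (extB (ε ∘ π)) (extPerm π.symm) α]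
    rw [act_ext_last (ε ∘ π) π.symm α]
    rw [show (fun j : Fin N => actZ (extB (ε ∘ π)) (extPerm π.symm) α j.castSucc)
      = actZ (ε ∘ π) π.symm (fun j : Fin N => α j.castSucc)
      from act_ext_res (ε ∘ π) π.symm α]
    refine if_congr ?_ rfl rfl
    constructor
    · intro hh
      rw [hh]
      exact (actE ε π).left_inv β
    · intro hh
      rw [← hh]
      exact ((actE ε π).right_inv _).symm

-- ============ subT at the last variable via resC ============

lemma update_last_eq_snoc (α : Fin (N + 1) → ℤ) :
    Function.update α (Fin.last N) 0
      = Fin.snoc (fun j : Fin N => α j.castSucc) 0 := by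
  funext j
  induction j using Fin.lastCases with
  | last => rw [Function.update_self, Fin.snoc_last]
  | cast j => rw [Function.update_of_ne (Fin.castSucc_lt_last j).ne, Fin.snoc_castSucc]

set_option maxHeartbeats 1000000 in
lemma subT_last_resC (t : ℂ) (c : AZ (N + 1)) :
    subT (Fin.last N) t c
      = AddMonoidAlgebra.mapDomain (fun β : Fin N → ℤ => (Fin.snoc β 0 : Fin (N + 1) → ℤ))
        (resC t c) := by
  rw [subT_apply, resC]
  have h1 : AddMonoidAlgebra.mapDomain (fun β : Fin N → ℤ => (Fin.snoc β 0 : Fin (N + 1) → ℤ))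
      (Finsupp.sum c.coeff fun α a => AddMonoidAlgebra.single (fun j : Fin N => α j.castSucc)
        (a * t ^ α (Fin.last N)))
      = Finsupp.sum c.coeff fun α a =>
          AddMonoidAlgebra.mapDomain (fun β : Fin N → ℤ => (Fin.snoc β 0 : Fin (N + 1) → ℤ))
          (AddMonoidAlgebra.single (fun j : Fin N => α j.castSucc)
            (a * t ^ α (Fin.last N))) := by
    exact map_finsuppSum (AddMonoidAlgebra.mapDomainLinearMap ℂ ℂ _) c.coeff _
  rw [h1]
  refine Finsupp.sum_congr fun α _ => ?_
  rw [AddMonoidAlgebra.mapDomain_single, update_last_eq_snoc]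

-- ============ iterated division ============

lemma iterate_div {c : AZ N} {t : ℂ} (ht : t ≠ 0) (ht2 : t ^ 2 ≠ 1)
    (hsub : ∀ i : Fin N, subT i t c = 0) (hsub' : ∀ i : Fin N, subT i t⁻¹ c = 0)
    {d : ℕ} (hdeg : DegLe c d) :
    ∃ h : AZ N, c = Fprod t * h ∧ ∀ α ∈ h.coeff.support, wtZ α + N ≤ d := by
  suffices H : ∀ k : ℕ, k ≤ N → ∃ h : AZ N,
      c = (∏ i ∈ Finset.univ.filter (fun i : Fin N => i.val < k), Ffac i t) * h ∧
      (∀ j : Fin N, k ≤ j.val → subT j t h = 0 ∧ subT j t⁻¹ h = 0) ∧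
      (∀ α ∈ h.coeff.support, wtZ α + k ≤ d) by
    obtain ⟨h, h1, _, h3⟩ := H N le_rfl
    refine ⟨h, ?_, h3⟩
    rw [h1, show Finset.univ.filter (fun i : Fin N => i.val < N) = Finset.univ from
      Finset.filter_true_of_mem fun i _ => i.isLt, Fprod]
  intro k
  induction k with
  | zero =>
    intro _
    refine ⟨c, ?_, fun j _ => ⟨hsub j, hsub' j⟩, fun α hα => by
      have := hdeg α hα; omega⟩
    rw [show Finset.univ.filter (fun i : Fin N => i.val < 0) = ∅ by
      ext j; simp, Finset.prod_empty, one_mul]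
  | succ k ihk =>
    intro hk1
    obtain ⟨h, hch, hsubs, hdegh⟩ := ihk (by omega)
    have hkN : k < N := by omega
    set jk : Fin N := ⟨k, hkN⟩ with hjk
    obtain ⟨h2, hh2⟩ := div_quad jk ht ht2 (hsubs jk le_rfl).1 (hsubs jk le_rfl).2
    have hfilter : Finset.univ.filter (fun i : Fin N => i.val < k + 1)
        = insert jk (Finset.univ.filter (fun i : Fin N => i.val < k)) := by
      ext j
      simp only [Finset.mem_filter, Finset.mem_insert, Finset.mem_univ, true_and, hjk,
        Fin.ext_iff]
      omega
    have hjknotmem : jk ∉ Finset.univ.filter (fun i : Fin N => i.val < k) := by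
      simp [hjk]
    refine ⟨h2, ?_, ?_, ?_⟩
    · rw [hch, hh2, hfilter, Finset.prod_insert hjknotmem]
      ring
    · intro j hj
      have hne : j ≠ jk := by
        intro he
        rw [he] at hj
        simp [hjk] at hj
      have h1 := (hsubs j (by omega)).1
      have h1' := (hsubs j (by omega)).2
      rw [hh2, subT_mul j ht, subT_Ffac hne t t] at h1
      rw [hh2, subT_mul j (inv_ne_zero ht), subT_Ffac hne t⁻¹ t] at h1'
      exact ⟨(mul_eq_zero.mp h1).resolve_left (Ffac_ne_zero jk ht),
        (mul_eq_zero.mp h1').resolve_left (Ffac_ne_zero jk ht)⟩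
    · have hd1 : DegLe h (d - k) := fun α hα => by have := hdegh α hα; omega
      have hq := deg_quot ht hh2 hd1
      intro α hα
      have := hq α hα
      omega
-- ============ the vanishing theorem ============

theorem vanishing : ∀ (n d : ℕ) (q : ℂ), 0 < ‖q‖ → ‖q‖ < 1 →
    ∀ τ : Fin n → ℂ, TauChain τ →
    ∀ c : AZ n, WInv c.coeff → DegLe c d →
    (∀ μ : Fin n → ℤ, IsPartition μ → wtZ μ ≤ d →
      evalL c.coeff (fun i => q ^ μ i * τ i) = 0) → c = 0 := by
  intro n
  induction n with
  | zero =>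
    intro d q hq0 hq1 τ hτ c hW hdeg hvan
    have hμ0 : IsPartition (0 : Fin 0 → ℤ) := ⟨fun i => i.elim0, fun i => i.elim0⟩
    have h0 := hvan 0 hμ0 (by simp [wtZ])
    have hall : ∀ α : Fin 0 → ℤ, α = 0 := fun α => funext fun i => i.elim0
    have hc : c = AddMonoidAlgebra.single (0 : Fin 0 → ℤ) (c.coeff 0) := by
      apply AddMonoidAlgebra.coeff_injective
      refine Finsupp.ext fun α => ?_
      rw [hall α, AddMonoidAlgebra.coeff_single, Finsupp.single_eq_same]
    have hc0 : c.coeff 0 = 0 := by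
      rw [hc, evalL_single, Finset.univ_eq_empty, Finset.prod_empty, mul_one] at h0
      exact h0
    rw [hc, hc0]
    exact AddMonoidAlgebra.single_zero _
  | succ n ih =>
    intro d
    induction d using Nat.strong_induction_on with
    | _ d ihd =>
    intro q hq0 hq1 τ hτ c hW hdeg hvan
    obtain ⟨hτpos, hτmono, hτlt1⟩ := hτ
    set t := τ (Fin.last n) with htdef
    have ht0 : t ≠ 0 := fun h => by
      have hp := hτpos (Fin.last n)
      rw [← htdef, h] at hp
      simp at hp
    have ht1 : ‖t‖ < 1 := hτlt1 _
    have ht2 : t ^ 2 ≠ 1 := fun h => by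
      have habs : ‖t ^ 2‖ = 1 := by rw [h]; simp
      rw [norm_pow] at habs
      nlinarith [norm_nonneg t]
    have hq : q ≠ 0 := fun h => by simp [h] at hq0
    have hτ' : TauChain (fun j : Fin n => τ j.castSucc) := by
      refine ⟨fun i => hτpos _, fun i j hij => ?_, fun i => hτlt1 _⟩
      exact hτmono (Fin.castSucc_lt_castSucc_iff.mpr hij)
    -- Step 1: the restriction to the last variable vanishes
    have hres : resC t c = 0 := by
      refine ih d q hq0 hq1 (fun j => τ j.castSucc) hτ' (resC t c)
        (WInv_resC t hW) (DegLe_resC t hdeg) ?_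
      intro μ hμ hwt
      rw [evalL_resC]
      have hsnocpart : IsPartition (Fin.snoc μ 0 : Fin (n + 1) → ℤ) := by
        obtain ⟨hd1, hd2⟩ := hμ
        constructor
        · intro i j hij
          rcases Fin.eq_castSucc_or_eq_last j with ⟨j', rfl⟩ | rfl
          · rcases Fin.eq_castSucc_or_eq_last i with ⟨i', rfl⟩ | rfl
            · rw [Fin.snoc_castSucc, Fin.snoc_castSucc]
              exact hd1 i' j' (Fin.castSucc_le_castSucc_iff.mp hij)
            · exact absurd hij (not_le.mpr (Fin.castSucc_lt_last j'))
          · rw [Fin.snoc_last]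
            rcases Fin.eq_castSucc_or_eq_last i with ⟨i', rfl⟩ | rfl
            · rw [Fin.snoc_castSucc]; exact hd2 i'
            · rw [Fin.snoc_last]
        · intro i
          rcases Fin.eq_castSucc_or_eq_last i with ⟨i', rfl⟩ | rfl
          · rw [Fin.snoc_castSucc]; exact hd2 i'
          · rw [Fin.snoc_last]
      have hwt2 : wtZ (Fin.snoc μ 0 : Fin (n + 1) → ℤ) ≤ d := by
        have heq : wtZ (Fin.snoc μ 0 : Fin (n + 1) → ℤ) = wtZ μ := by
          unfold wtZ
          rw [Fin.sum_univ_castSucc]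
          simp [Fin.snoc_castSucc, Fin.snoc_last]
        omega
      have hpt := hvan (Fin.snoc μ 0) hsnocpart hwt2
      have hxeq : (Fin.snoc (fun j : Fin n => q ^ μ j * τ j.castSucc) t : Fin (n+1) → ℂ)
          = fun i => q ^ (Fin.snoc μ 0 : Fin (n + 1) → ℤ) i * τ i := by
        funext i
        rcases Fin.eq_castSucc_or_eq_last i with ⟨i', rfl⟩ | rfl
        · rw [Fin.snoc_castSucc, Fin.snoc_castSucc]
        · rw [Fin.snoc_last, Fin.snoc_last]
          simp [htdef]
      rw [hxeq]
      exact hpt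
    have hsublast : subT (Fin.last n) t c = 0 := by
      rw [subT_last_resC, hres, AddMonoidAlgebra.mapDomain_zero]
    have hsuball : ∀ i : Fin (n + 1), subT i t c = 0 := by
      intro i
      have hperm := Tact_subT_perm (Equiv.swap i (Fin.last n)) (Fin.last n) t c
      rw [hsublast, map_zero, (winv_iff c).mp hW (fun _ => false) (Equiv.swap i (Fin.last n)),
        Equiv.swap_apply_right] at hperm
      exact hperm.symm
    have hsuball' : ∀ i : Fin (n + 1), subT i t⁻¹ c = 0 := by
      intro i
      have hflip := Tact_subT_flip i t c
      rw [(winv_iff c).mp hW (flipB i) (Equiv.refl _), hsuball i] at hflip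
      exact (map_eq_zero_iff _ (AlgEquiv.injective _)).mp hflip.symm
    obtain ⟨h, hch, hdegh⟩ := iterate_div ht0 ht2 hsuball hsuball' hdeg
    by_cases hd : n + 1 ≤ d
    · have hWh : WInv h.coeff := by
        rw [winv_iff h]
        intro ε π
        have h1 := (winv_iff c).mp hW ε π
        rw [hch, map_mul, Tact_Fprod] at h1
        exact mul_left_cancel₀ (Fprod_ne_zero ht0) h1
      have hdegh' : DegLe h (d - (n + 1)) := fun α hα => by have := hdegh α hα; omega
      have hτq : TauChain (fun i : Fin (n + 1) => q * τ i) := by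
        refine ⟨fun i => ?_, fun i j hij => ?_, fun i => ?_⟩
        · rw [norm_mul]; exact mul_pos hq0 (hτpos i)
        · simp only [norm_mul]
          exact mul_lt_mul_of_pos_left (hτmono hij) hq0
        · rw [norm_mul]
          nlinarith [norm_nonneg q, norm_nonneg (τ i), hτlt1 i, hτpos i]
      have hvanh : ∀ ν : Fin (n + 1) → ℤ, IsPartition ν → wtZ ν ≤ d - (n + 1) →
          evalL h.coeff (fun i => q ^ ν i * (q * τ i)) = 0 := by
        intro ν hν hwtν
        set μ : Fin (n + 1) → ℤ := fun i => ν i + 1 with hμdef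
        have hμpart : IsPartition μ := by
          constructor
          · intro i j hij
            show ν j + 1 ≤ ν i + 1
            have := hν.1 i j hij
            omega
          · intro i
            show 0 ≤ ν i + 1
            have := hν.2 i
            omega
        have hwtμ : wtZ μ = wtZ ν + (n + 1) := by
          unfold wtZ
          rw [show ∑ i, (μ i).natAbs = ∑ i, ((ν i).natAbs + 1) from
            Finset.sum_congr rfl fun i _ => by
              show (ν i + 1).natAbs = (ν i).natAbs + 1
              have := hν.2 i
              omega]
          rw [Finset.sum_add_distrib]
          simp
        have hx : ∀ i, (q ^ μ i * τ i : ℂ) ≠ 0 := fun i =>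
          mul_ne_zero (zpow_ne_zero _ hq) fun hh => by
            have := hτpos i; rw [hh] at this; simp at this
        have hvc := hvan μ hμpart (by omega)
        rw [hch, evalL_mul hx] at hvc
        have hFne : evalL (Fprod t : AZ (n + 1)).coeff (fun i => q ^ μ i * τ i) ≠ 0 := by
          rw [evalL_Fprod t hx]
          apply Finset.prod_ne_zero_iff.mpr
          intro i _
          have hμi : 1 ≤ μ i := by
            have := hν.2 i
            show 1 ≤ ν i + 1
            omega
          have habs : ‖q ^ μ i * τ i‖ < ‖t‖ := by
            rw [norm_mul]
            have h1 : ‖q ^ μ i‖ < 1 := by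
              rw [show q ^ μ i = q ^ (μ i).toNat by
                rw [← zpow_natCast]; congr 1; omega]
              rw [norm_pow]
              exact pow_lt_one₀ (norm_nonneg q) hq1 (by omega)
            have h2 : ‖τ i‖ ≤ ‖t‖ := by
              rcases eq_or_lt_of_le (Fin.le_last i) with he | hlt
              · rw [htdef, he]
              · exact le_of_lt (hτmono hlt)
            nlinarith [hτpos i, hτpos (Fin.last n)]
          refine mul_ne_zero ?_ ?_
          · intro hh
            rw [sub_eq_zero] at hh
            rw [hh] at habs
            exact lt_irrefl _ habs
          · intro hh
            rw [sub_eq_zero] at hh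
            have hmul : (q ^ μ i * τ i) * t = 1 := by
              rw [← hh, mul_inv_cancel₀ (hx i)]
            have habs1 := congrArg (‖·‖) hmul
            rw [norm_mul, norm_one] at habs1
            nlinarith [norm_nonneg (q ^ μ i * τ i), norm_nonneg t, habs, ht1]
        have hhv : evalL h.coeff (fun i => q ^ μ i * τ i) = 0 :=
          (mul_eq_zero.mp hvc).resolve_left hFne
        rw [show (fun i : Fin (n + 1) => q ^ ν i * (q * τ i))
            = fun i => q ^ μ i * τ i from funext fun i => by
          show q ^ ν i * (q * τ i) = q ^ (ν i + 1) * τ i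
          rw [zpow_add₀ hq, zpow_one]
          ring]
        exact hhv
      have hzero : h = 0 := ihd (d - (n + 1)) (by omega) q hq0 hq1 _ hτq h hWh hdegh' hvanh
      rw [hch, hzero, mul_zero]
    · have hzero : h = 0 := by
        ext α
        by_contra hne
        have := hdegh α (Finsupp.mem_support_iff.mpr hne)
        omega
      rw [hch, hzero, mul_zero]

-- ============ nonvanishing of the factors at dominant points ============

lemma fac_ne_at_point {q : ℂ} (hq0 : 0 < ‖q‖) (hq1 : ‖q‖ < 1)
    {τi t : ℂ} (hτi : 0 < ‖τi‖) (hle : ‖τi‖ ≤ ‖t‖)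
    (ht1 : ‖t‖ < 1) {k : ℤ} (hk : 1 ≤ k) :
    (q ^ k * τi - t) * ((q ^ k * τi)⁻¹ - t) ≠ 0 := by
  have hq : q ≠ 0 := fun h => by simp [h] at hq0
  have hτine : τi ≠ 0 := fun h => by simp [h] at hτi
  have hxne : q ^ k * τi ≠ 0 := mul_ne_zero (zpow_ne_zero _ hq) hτine
  have habs : ‖q ^ k * τi‖ < ‖t‖ := by
    rw [norm_mul]
    have h1 : ‖q ^ k‖ < 1 := by
      rw [show q ^ k = q ^ k.toNat by rw [← zpow_natCast]; congr 1; omega]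
      rw [norm_pow]
      exact pow_lt_one₀ (norm_nonneg q) hq1 (by omega)
    nlinarith
  refine mul_ne_zero ?_ ?_
  · intro hh
    rw [sub_eq_zero] at hh
    rw [hh] at habs
    exact lt_irrefl _ habs
  · intro hh
    rw [sub_eq_zero] at hh
    have hmul : (q ^ k * τi) * t = 1 := by rw [← hh, mul_inv_cancel₀ hxne]
    have habs1 := congrArg (‖·‖) hmul
    rw [norm_mul, norm_one] at habs1
    nlinarith [norm_nonneg (q ^ k * τi), norm_nonneg t]

lemma wtZ_shift {N : ℕ} (μ : Fin N → ℤ) (hpos : ∀ i, 0 < μ i) :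
    wtZ (fun i => μ i - 1) + N = wtZ μ := by
  unfold wtZ
  rw [show ∑ i, (μ i).natAbs = ∑ i, (((fun i => μ i - 1) i).natAbs + 1) from
    Finset.sum_congr rfl fun i _ => by have := hpos i; show _ = (μ i - 1).natAbs + 1; omega]
  rw [Finset.sum_add_distrib]
  simp

/-- If `l` is a partition with all parts positive, then
`R_l(x;q,τ) = R_{l-𝟏}(x;q,qτ) ∏ᵢ (xᵢ-τₙ)(xᵢ⁻¹-τₙ)/((l̄ᵢ-τₙ)(l̄ᵢ⁻¹-τₙ))`,
where `R1` resp. `R2` satisfy the defining properties of `R_l(·;q,τ)` resp.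
`R_{l-𝟏}(·;q,qτ)` and `l̄ᵢ = q^{lᵢ}τᵢ`. -/
theorem stmt16 {n : ℕ} (q : ℂ) (hq0 : 0 < ‖q‖) (hq1 : ‖q‖ < 1)
    (τ : Fin (n + 1) → ℂ) (hτ : TauChain τ)
    (l : Fin (n + 1) → ℤ) (hl : IsPartition l) (hpos : ∀ i, 0 < l i)
    (R1 : (Fin (n + 1) → ℤ) →₀ ℂ) (hR1W : WInv R1)
    (hR1deg : ∀ α ∈ R1.support, wtZ α ≤ wtZ l)
    (hR1int : ∀ μ : Fin (n + 1) → ℤ, IsPartition μ → wtZ μ ≤ wtZ l →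
      evalL R1 (fun i => q ^ μ i * τ i) = if μ = l then 1 else 0)
    (R2 : (Fin (n + 1) → ℤ) →₀ ℂ) (hR2W : WInv R2)
    (hR2deg : ∀ α ∈ R2.support, wtZ α ≤ wtZ (fun i => l i - 1))
    (hR2int : ∀ μ : Fin (n + 1) → ℤ, IsPartition μ → wtZ μ ≤ wtZ (fun i => l i - 1) →
      evalL R2 (fun i => q ^ μ i * (q * τ i)) = if μ = (fun i => l i - 1) then 1 else 0) :
    ∀ x : Fin (n + 1) → ℂ, (∀ i, x i ≠ 0) →
      evalL R1 x = evalL R2 x *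
        ∏ i, ((x i - τ (Fin.last n)) * ((x i)⁻¹ - τ (Fin.last n)) /
          ((q ^ l i * τ i - τ (Fin.last n)) * ((q ^ l i * τ i)⁻¹ - τ (Fin.last n)))) := by
  obtain ⟨hτpos, hτmono, hτlt1⟩ := hτ
  have hq : q ≠ 0 := fun h => by simp [h] at hq0
  intro x hx
  set t := τ (Fin.last n) with htdef
  have ht1 : ‖t‖ < 1 := hτlt1 _
  have hτle : ∀ i : Fin (n + 1), ‖τ i‖ ≤ ‖t‖ := by
    intro i
    rcases eq_or_lt_of_le (Fin.le_last i) with he | hlt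
    · rw [htdef, he]
    · exact le_of_lt (hτmono hlt)
  have hfac : ∀ i : Fin (n + 1),
      ((q ^ l i * τ i - t) * ((q ^ l i * τ i)⁻¹ - t)) ≠ 0 := fun i =>
    fac_ne_at_point hq0 hq1 (hτpos i) (hτle i) ht1 (hpos i)
  have hclam_ne : (∏ i, ((q ^ l i * τ i - t) * ((q ^ l i * τ i)⁻¹ - t))) ≠ 0 :=
    Finset.prod_ne_zero_iff.mpr fun i _ => hfac i
  set clam := ∏ i, ((q ^ l i * τ i - t) * ((q ^ l i * τ i)⁻¹ - t)) with hclam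
  have hwtl : wtZ (fun i => l i - 1) + (n + 1) = wtZ l := wtZ_shift l hpos
  set G : AZ (n + 1) :=
    @HMul.hMul (AZ (n + 1)) (AZ (n + 1)) (AZ (n + 1)) _ (AddMonoidAlgebra.single 0 clam) (AddMonoidAlgebra.ofCoeff R1)
    - @HMul.hMul (AZ (n + 1)) (AZ (n + 1)) (AZ (n + 1)) _ (AddMonoidAlgebra.ofCoeff R2) (Fprod t) with hG
  have hGzero : G = 0 := by
    refine vanishing (n + 1) (wtZ l) q hq0 hq1 τ ⟨hτpos, hτmono, hτlt1⟩ G ?_ ?_ ?_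
    · -- W-invariance
      rw [winv_iff G]
      intro ε π
      rw [hG, map_sub, map_mul, map_mul, Tact_single, Tact_Fprod,
        (winv_iff (AddMonoidAlgebra.ofCoeff R1)).mp hR1W ε π, (winv_iff (AddMonoidAlgebra.ofCoeff R2)).mp hR2W ε π,
        show actE ε π 0 = 0 from map_zero _]
    · -- degree
      intro α hα
      rw [hG, AddMonoidAlgebra.coeff_sub] at hα
      rcases Finset.mem_union.mp (Finsupp.support_sub hα) with h1 | h1
      · have hD : DegLe (@HMul.hMul (AZ (n + 1)) (AZ (n + 1)) (AZ (n + 1)) _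
            (AddMonoidAlgebra.single (0 : Fin (n + 1) → ℤ) clam) (AddMonoidAlgebra.ofCoeff R1)) (0 + wtZ l) :=
          DegLe_mul (DegLe_single (by rw [wtZ_zero])) hR1deg
        have := hD α h1
        omega
      · have hD : DegLe (@HMul.hMul (AZ (n + 1)) (AZ (n + 1)) (AZ (n + 1)) _
            (AddMonoidAlgebra.ofCoeff R2) (Fprod t)) (wtZ (fun i => l i - 1) + (n + 1)) :=
          DegLe_mul hR2deg (DegLe_Fprod t)
        have := hD α h1
        omega
    · -- interpolation vanishing
      intro μ hμ hwt
      have hxμ : ∀ i, (q ^ μ i * τ i : ℂ) ≠ 0 := fun i =>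
        mul_ne_zero (zpow_ne_zero _ hq) fun hh => by
          have := hτpos i; rw [hh] at this; simp at this
      rw [hG, evalL_sub, evalL_mul hxμ, evalL_mul hxμ, evalL_single, evalL_Fprod t hxμ,
        AddMonoidAlgebra.coeff_ofCoeff, AddMonoidAlgebra.coeff_ofCoeff]
      have hone : (∏ i, (q ^ μ i * τ i) ^ (0 : Fin (n + 1) → ℤ) i) = 1 := by simp
      rw [hone, mul_one, hR1int μ hμ hwt]
      by_cases hμl : μ = l
      · subst hμl
        rw [if_pos rfl]
        have hptid : (fun i : Fin (n + 1) => q ^ (μ i - 1) * (q * τ i))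
            = fun i => q ^ μ i * τ i := by
          funext i
          conv_rhs => rw [show (μ i : ℤ) = (μ i - 1) + 1 by ring, zpow_add₀ hq, zpow_one]
          ring
        have hR2v := hR2int (fun i => μ i - 1)
          ⟨fun i j hij => by have := hl.1 i j hij; show μ j - 1 ≤ μ i - 1; omega,
           fun i => by have := hpos i; show 0 ≤ μ i - 1; omega⟩ le_rfl
        rw [if_pos rfl, hptid] at hR2v
        rw [hR2v]
        ring
      · rw [if_neg hμl]
        by_cases hlast : μ (Fin.last n) = 0
        · have hzeroprod : (∏ i, ((q ^ μ i * τ i - t) * ((q ^ μ i * τ i)⁻¹ - t))) = 0 := by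
            refine Finset.prod_eq_zero (Finset.mem_univ (Fin.last n)) ?_
            rw [hlast]
            simp [htdef]
          rw [show (∏ i, ((fun i => q ^ μ i * τ i) i - t) *
              (((fun i => q ^ μ i * τ i) i)⁻¹ - t)) = 0 from hzeroprod]
          ring
        · have hμpos : ∀ i, 0 < μ i := fun i => by
            have h1 := hμ.1 i (Fin.last n) (Fin.le_last i)
            have h2 := hμ.2 (Fin.last n)
            omega
          have hwtμ := wtZ_shift μ hμpos
          have hptid : (fun i : Fin (n + 1) => q ^ (μ i - 1) * (q * τ i))
              = fun i => q ^ μ i * τ i := by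
            funext i
            conv_rhs => rw [show (μ i : ℤ) = (μ i - 1) + 1 by ring, zpow_add₀ hq, zpow_one]
            ring
          have hR2v := hR2int (fun i => μ i - 1)
            ⟨fun i j hij => by have := hμ.1 i j hij; show μ j - 1 ≤ μ i - 1; omega,
             fun i => by have := hμpos i; show 0 ≤ μ i - 1; omega⟩ (by omega)
          rw [hptid] at hR2v
          rw [if_neg (fun he => hμl (funext fun i => by
            have := congrFun he i
            omega))] at hR2v
          rw [hR2v]
          ring
  -- conclude
  have hzero := congrArg (fun z : AZ (n + 1) => evalL z.coeff x) hGzero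
  rw [hG, evalL_sub, evalL_mul hx, evalL_mul hx, evalL_single, evalL_Fprod t hx,
    AddMonoidAlgebra.coeff_ofCoeff, AddMonoidAlgebra.coeff_ofCoeff] at hzero
  have h00 : evalL (0 : AZ (n + 1)).coeff x = 0 := by simp [evalL]
  rw [h00] at hzero
  have hone : (∏ i, x i ^ (0 : Fin (n + 1) → ℤ) i) = 1 := by simp
  rw [hone, mul_one] at hzero
  -- hzero : clam * evalL R1 x - evalL R2 x * ∏ (x i - t)((x i)⁻¹ - t) = 0
  rw [Finset.prod_div_distrib, ← hclam, ← mul_div_assoc, eq_div_iff hclam_ne]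
  linear_combination hzero
end
end
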